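/- arXiv:1309.0931 — 9 statements merged into one kernel-verified Lean document; each statement's English description precedes it below -/
import Mathlib

section
/- With f convex and φ a φ-regular function, the regularization f_φ(x) = min_{z ∈ ℝⁿ} [f(z) + (1/λ)φ(z,x)] is a convex function of x. -/
open Set Filter Topology RealInnerProductSpace

/-- A φ-regular function on ℝⁿ, together with its partial gradients `Dz`, `Dx`,
strong-convexity modulus `β` and Lipschitz constant `L` for `∇φ`. -/
structure PhiRegular (n : ℕ) where
  φ : EuclideanSpace ℝ (Fin n) → EuclideanSpace ℝ (Fin n) → ℝ
  Dz : EuclideanSpace ℝ (Fin n) → EuclideanSpace ℝ (Fin n) → EuclideanSpace ℝ (Fin n)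
  Dx : EuclideanSpace ℝ (Fin n) → EuclideanSpace ℝ (Fin n) → EuclideanSpace ℝ (Fin n)
  β : ℝ
  L : ℝ
  β_pos : 0 < β
  L_pos : 0 < L
  contDiff : ContDiff ℝ 1 (fun p : EuclideanSpace ℝ (Fin n) × EuclideanSpace ℝ (Fin n) => φ p.1 p.2)
  gradZ : ∀ z x, HasGradientAt (fun z' => φ z' x) (Dz z x) z
  gradX : ∀ z x, HasGradientAt (fun x' => φ z x') (Dx z x) x
  nonneg : ∀ z x, 0 ≤ φ z x
  eq_zero_iff : ∀ z x, φ z x = 0 ↔ z = x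
  strong : ∀ z' z x' x, φ z x + ⟪Dz z x, z' - z⟫ + ⟪Dx z x, x' - x⟫
      + β * ‖(z' - z) - (x' - x)‖ ^ 2 ≤ φ z' x'
  lip : ∀ z' z x' x, ‖Dz z' x' - Dz z x‖ ^ 2 + ‖Dx z' x' - Dx z x‖ ^ 2
      ≤ L ^ 2 * ‖(z' - z) - (x' - x)‖ ^ 2
  skew : ∀ z x, Dz z x = - Dx z x

/-- the regularization `f_φ(x) = min_z [f z + (1/λ) φ z x]` is convex. -/
theorem phi_regularization_convex (n : ℕ) (R : PhiRegular n)
    (f : EuclideanSpace ℝ (Fin n) → ℝ) (hf : ConvexOn ℝ univ f)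
    (lam : ℝ) (hlam : 0 < lam)
    (p : EuclideanSpace ℝ (Fin n) → EuclideanSpace ℝ (Fin n))
    (fphi : EuclideanSpace ℝ (Fin n) → ℝ)
    (hfphi : ∀ x, fphi x = f (p x) + (1 / lam) * R.φ (p x) x)
    (hmin : ∀ x z, fphi x ≤ f z + (1 / lam) * R.φ z x) :
    ConvexOn ℝ univ fphi := by
  refine ⟨convex_univ, fun x _ y _ a b ha hb hab => ?_⟩
  set z1 := p x with hz1
  set z2 := p y with hz2
  set zb := a • z1 + b • z2 with hzb
  set xb := a • x + b • y with hxb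
  have h1 := R.strong z1 zb x xb
  have h2 := R.strong z2 zb y xb
  have hz0 : a • (z1 - zb) + b • (z2 - zb) = (0 : EuclideanSpace ℝ (Fin n)) := by
    have h : a • (z1 - zb) + b • (z2 - zb) = (a • z1 + b • z2) - (a + b) • zb := by
      module
    rw [h, hab, one_smul, ← hzb, sub_self]
  have hx0 : a • (x - xb) + b • (y - xb) = (0 : EuclideanSpace ℝ (Fin n)) := by
    have h : a • (x - xb) + b • (y - xb) = (a • x + b • y) - (a + b) • xb := by
      module
    rw [h, hab, one_smul, ← hxb, sub_self]
  have hiz : a * ⟪R.Dz zb xb, z1 - zb⟫ + b * ⟪R.Dz zb xb, z2 - zb⟫ = 0 := by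
    rw [← real_inner_smul_right, ← real_inner_smul_right, ← inner_add_right, hz0,
      inner_zero_right]
  have hix : a * ⟪R.Dx zb xb, x - xb⟫ + b * ⟪R.Dx zb xb, y - xb⟫ = 0 := by
    rw [← real_inner_smul_right, ← real_inner_smul_right, ← inner_add_right, hx0,
      inner_zero_right]
  have hβ1 : 0 ≤ R.β * ‖(z1 - zb) - (x - xb)‖ ^ 2 :=
    mul_nonneg R.β_pos.le (by positivity)
  have hβ2 : 0 ≤ R.β * ‖(z2 - zb) - (y - xb)‖ ^ 2 :=
    mul_nonneg R.β_pos.le (by positivity)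
  have habφ : a * R.φ zb xb + b * R.φ zb xb = R.φ zb xb := by
    rw [← add_mul, hab, one_mul]
  have hphi : R.φ zb xb ≤ a * R.φ z1 x + b * R.φ z2 y := by
    nlinarith [mul_le_mul_of_nonneg_left h1 ha, mul_le_mul_of_nonneg_left h2 hb,
      mul_nonneg ha hβ1, mul_nonneg hb hβ2, habφ, hiz, hix]
  have hfc : f zb ≤ a * f z1 + b * f z2 := hf.2 (mem_univ z1) (mem_univ z2) ha hb hab
  have hmain := hmin xb zb
  have hmul : (1 / lam) * R.φ zb xb ≤ (1 / lam) * (a * R.φ z1 x + b * R.φ z2 y) :=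
    mul_le_mul_of_nonneg_left hphi (by positivity)
  rw [hfphi x, hfphi y]
  simp only [smul_eq_mul]
  nlinarith [hmain, hfc, hmul]
end

section
/- The regularization f_φ is everywhere differentiable with gradient ∇f_φ(x) = (1/λ)∇_x φ(p(x), x), where p(x) is the unique minimizer of z ↦ f(z) + (1/λ)φ(z,x). -/
open Set Filter Topology RealInnerProductSpace

set_option maxHeartbeats 1000000

namespace PhiRegularAux

variable {n : ℕ}

/-- `Dx = - Dz`. -/
lemma dx_eq {R : PhiRegular n} (z x : EuclideanSpace ℝ (Fin n)) :
    R.Dx z x = - R.Dz z x := by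
  rw [R.skew z x]; simp

/-- Convexity-type lower bound (with the strong-convexity term kept). -/
lemma lower_strong {R : PhiRegular n} (z' z x' x : EuclideanSpace ℝ (Fin n)) :
    R.φ z x + ⟪R.Dz z x, (z' - z) - (x' - x)⟫ + R.β * ‖(z' - z) - (x' - x)‖ ^ 2
      ≤ R.φ z' x' := by
  have h := R.strong z' z x' x
  have hre : ⟪R.Dz z x, (z' - z) - (x' - x)⟫
      = ⟪R.Dz z x, z' - z⟫ + ⟪R.Dx z x, x' - x⟫ := by
    rw [inner_sub_right, dx_eq, inner_neg_left]
    ring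
  linarith [h, hre.le, hre.ge]

/-- Convexity-type lower bound. -/
lemma lower {R : PhiRegular n} (z' z x' x : EuclideanSpace ℝ (Fin n)) :
    R.φ z x + ⟪R.Dz z x, (z' - z) - (x' - x)⟫ ≤ R.φ z' x' := by
  have h := lower_strong (R := R) z' z x' x
  have hβ : 0 ≤ R.β * ‖(z' - z) - (x' - x)‖ ^ 2 :=
    mul_nonneg R.β_pos.le (sq_nonneg _)
  linarith

/-- Lipschitz bound for `Dz`. -/
lemma dz_lip {R : PhiRegular n} (z' z x' x : EuclideanSpace ℝ (Fin n)) :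
    ‖R.Dz z' x' - R.Dz z x‖ ≤ R.L * ‖(z' - z) - (x' - x)‖ := by
  have h := R.lip z' z x' x
  have h2 : (0:ℝ) ≤ ‖R.Dx z' x' - R.Dx z x‖ ^ 2 := sq_nonneg _
  have ha : (0:ℝ) ≤ ‖R.Dz z' x' - R.Dz z x‖ := norm_nonneg _
  have hb : (0:ℝ) ≤ R.L * ‖(z' - z) - (x' - x)‖ :=
    mul_nonneg R.L_pos.le (norm_nonneg _)
  nlinarith [sq_nonneg (‖R.Dz z' x' - R.Dz z x‖ - R.L * ‖(z' - z) - (x' - x)‖),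
    sq_nonneg (‖R.Dz z' x' - R.Dz z x‖ + R.L * ‖(z' - z) - (x' - x)‖)]

/-- Descent-type upper bound. -/
lemma descent {R : PhiRegular n} (z' z x' x : EuclideanSpace ℝ (Fin n)) :
    R.φ z' x' ≤ R.φ z x + ⟪R.Dz z x, (z' - z) - (x' - x)⟫
      + R.L * ‖(z' - z) - (x' - x)‖ ^ 2 := by
  set w := (z' - z) - (x' - x) with hw
  have h := lower (R := R) z z' x x'
  have hww : (z - z') - (x - x') = -w := by rw [hw]; abel
  rw [hww, inner_neg_right] at h
  -- h : R.φ z' x' - ⟪R.Dz z' x', w⟫ ≤ R.φ z x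
  have hsplit : ⟪R.Dz z' x', w⟫
      = ⟪R.Dz z x, w⟫ + ⟪R.Dz z' x' - R.Dz z x, w⟫ := by
    rw [inner_sub_left]; ring
  have hcs : ⟪R.Dz z' x' - R.Dz z x, w⟫ ≤ ‖R.Dz z' x' - R.Dz z x‖ * ‖w‖ :=
    real_inner_le_norm _ _
  have hlip := dz_lip (R := R) z' z x' x
  have : ‖R.Dz z' x' - R.Dz z x‖ * ‖w‖ ≤ R.L * ‖w‖ ^ 2 := by
    have := mul_le_mul_of_nonneg_right hlip (norm_nonneg w)
    nlinarith [norm_nonneg w]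
  linarith

/-- Midpoint strong convexity of `φ(·, x)`. -/
lemma midpoint_ineq {R : PhiRegular n} (a b x : EuclideanSpace ℝ (Fin n)) :
    R.φ ((1/2:ℝ) • (a + b)) x + (R.β/4) * ‖a - b‖ ^ 2
      ≤ (1/2) * R.φ a x + (1/2) * R.φ b x := by
  set m := (1/2:ℝ) • (a + b) with hm
  have ha : a - m = (1/2:ℝ) • (a - b) := by rw [hm]; module
  have hb : b - m = -((1/2:ℝ) • (a - b)) := by rw [hm]; module
  have h1 := lower_strong (R := R) a m x x
  have h2 := lower_strong (R := R) b m x x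
  rw [sub_self] at h1 h2
  rw [sub_zero] at h1 h2
  rw [ha] at h1
  rw [hb] at h2
  rw [inner_neg_right, norm_neg] at h2
  have hns : ‖(1/2:ℝ) • (a - b)‖ = (1/2) * ‖a - b‖ := by
    rw [norm_smul]; simp
  rw [hns] at h1 h2
  nlinarith [h1, h2]

end PhiRegularAux

open PhiRegularAux in
/-- `f_φ` is everywhere differentiable with gradient
`∇f_φ(x) = (1/λ) ∇_x φ(p(x), x)`. -/
theorem phi_regularization_gradient (n : ℕ) (R : PhiRegular n)
    (f : EuclideanSpace ℝ (Fin n) → ℝ) (hf : ConvexOn ℝ univ f)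
    (lam : ℝ) (hlam : 0 < lam)
    (p : EuclideanSpace ℝ (Fin n) → EuclideanSpace ℝ (Fin n))
    (hp : ∀ x z, f (p x) + (1 / lam) * R.φ (p x) x ≤ f z + (1 / lam) * R.φ z x)
    (fphi : EuclideanSpace ℝ (Fin n) → ℝ)
    (hfphi : ∀ x, fphi x = f (p x) + (1 / lam) * R.φ (p x) x) :
    ∀ x, HasGradientAt fphi ((1 / lam) • R.Dx (p x) x) x := by
  have hil : (0:ℝ) < 1 / lam := by positivity
  set C : ℝ := (2 * R.L + R.β) / R.β with hC
  have hC1 : (1:ℝ) ≤ C := by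
    rw [hC, le_div_iff₀ R.β_pos]
    nlinarith [R.L_pos]
  have hC0 : (0:ℝ) ≤ C := by linarith
  -- p is Lipschitz with constant C
  have hplip : ∀ x y, ‖p y - p x‖ ≤ C * ‖y - x‖ := by
    intro x y
    set t := ‖p y - p x‖ with ht
    set s := ‖y - x‖ with hs
    have hkey : R.β * t ^ 2 ≤ R.L * (t + s) * s := by
      -- midpoint argument at x and at y
      set m := (1/2:ℝ) • (p x + p y) with hm
      have hmx := hp x m
      have hmy := hp y m
      have hmid_x := midpoint_ineq (R := R) (p x) (p y) x
      have hmid_y := midpoint_ineq (R := R) (p x) (p y) y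
      have hconv : f m ≤ (1/2) * f (p x) + (1/2) * f (p y) := by
        have h := hf.2 (mem_univ (p x)) (mem_univ (p y))
          (by norm_num : (0:ℝ) ≤ 1/2) (by norm_num : (0:ℝ) ≤ 1/2) (by norm_num)
        have hmm : (1/2:ℝ) • p x + (1/2:ℝ) • p y = m := by rw [hm]; module
        rw [hmm] at h
        simpa using h
      -- combine: β/2 * t^2 ≤ bracket
      have hbr : R.β * t ^ 2
          ≤ (R.φ (p y) x - R.φ (p y) y) + (R.φ (p x) y - R.φ (p x) x) := by
        have e1 : (1/lam) * ((R.β/4) * ‖p x - p y‖^2)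
            ≤ (1/lam) * ((1/2) * R.φ (p x) x + (1/2) * R.φ (p y) x - R.φ m x) :=
          mul_le_mul_of_nonneg_left (by linarith [hmid_x]) hil.le
        have e2 : (1/lam) * ((R.β/4) * ‖p x - p y‖^2)
            ≤ (1/lam) * ((1/2) * R.φ (p x) y + (1/2) * R.φ (p y) y - R.φ m y) :=
          mul_le_mul_of_nonneg_left (by linarith [hmid_y]) hil.le
        have hnorm : ‖p x - p y‖ = t := by rw [ht, norm_sub_rev]
        rw [hnorm] at e1 e2
        -- from minimality at x:
        -- f(px) + (1/lam) φ(px,x) ≤ f m + (1/lam) φ(m,x)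
        -- and f m ≤ ½ f(px) + ½ f(py), φ(m,x) ≤ ½φ(px,x)+½φ(py,x) − (β/4)t²
        have q1 : (1/lam) * ((R.β/4) * t^2)
            ≤ (1/2) * (f (p y) + (1/lam) * R.φ (p y) x)
              - (1/2) * (f (p x) + (1/lam) * R.φ (p x) x) := by
          linarith [hmx, hconv, e1]
        have q2 : (1/lam) * ((R.β/4) * t^2)
            ≤ (1/2) * (f (p x) + (1/lam) * R.φ (p x) y)
              - (1/2) * (f (p y) + (1/lam) * R.φ (p y) y) := by
          linarith [hmy, hconv, e2]
        have hsum : (1/lam) * (R.β * t^2)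
            ≤ (1/lam) * ((R.φ (p y) x - R.φ (p y) y)
              + (R.φ (p x) y - R.φ (p x) x)) := by linarith [q1, q2]
        exact (mul_le_mul_iff_right₀ hil).mp hsum
      -- bound the bracket by L (t+s) s
      have b1 : R.φ (p y) x - R.φ (p y) y ≤ ⟪R.Dz (p y) x, y - x⟫ := by
        have h := lower (R := R) (p y) (p y) y x
        rw [sub_self] at h
        have hw : (0:EuclideanSpace ℝ (Fin n)) - (y - x) = -(y - x) := by abel
        rw [hw, inner_neg_right] at h
        linarith
      have b2 : R.φ (p x) y - R.φ (p x) x ≤ -⟪R.Dz (p x) y, y - x⟫ := by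
        have h := lower (R := R) (p x) (p x) x y
        rw [sub_self] at h
        have hw : (0:EuclideanSpace ℝ (Fin n)) - (x - y) = y - x := by abel
        rw [hw] at h
        linarith
      have hdiff : ⟪R.Dz (p y) x, y - x⟫ - ⟪R.Dz (p x) y, y - x⟫
          = ⟪R.Dz (p y) x - R.Dz (p x) y, y - x⟫ := by rw [inner_sub_left]
      have hcs : ⟪R.Dz (p y) x - R.Dz (p x) y, y - x⟫
          ≤ ‖R.Dz (p y) x - R.Dz (p x) y‖ * s := real_inner_le_norm _ _
      have hlz : ‖R.Dz (p y) x - R.Dz (p x) y‖ ≤ R.L * (t + s) := by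
        have h := dz_lip (R := R) (p y) (p x) x y
        have hn : ‖(p y - p x) - (x - y)‖ ≤ t + s := by
          calc ‖(p y - p x) - (x - y)‖ ≤ ‖p y - p x‖ + ‖x - y‖ := norm_sub_le _ _
          _ = t + s := by rw [ht, hs, norm_sub_rev x y]
        calc ‖R.Dz (p y) x - R.Dz (p x) y‖ ≤ R.L * ‖(p y - p x) - (x - y)‖ := h
        _ ≤ R.L * (t + s) := mul_le_mul_of_nonneg_left hn R.L_pos.le
      have hs0 : (0:ℝ) ≤ s := norm_nonneg _
      have ht0 : (0:ℝ) ≤ t := norm_nonneg _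
      have hlznl := mul_le_mul_of_nonneg_right hlz hs0
      have hexp : R.L * (t + s) * s = R.L * (t + s) * s := rfl
      nlinarith [hbr, b1, b2, hdiff.le, hdiff.ge, hcs, hlznl]
    -- solve the quadratic inequality
    have hs0 : (0:ℝ) ≤ s := norm_nonneg _
    have ht0 : (0:ℝ) ≤ t := norm_nonneg _
    by_cases hts : t ≤ s
    · calc t ≤ s := hts
      _ = 1 * s := (one_mul s).symm
      _ ≤ C * s := mul_le_mul_of_nonneg_right hC1 hs0
    · push_neg at hts
      have ht0' : 0 < t := lt_of_le_of_lt hs0 hts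
      have hss : R.L * s * s ≤ R.L * t * s :=
        mul_le_mul_of_nonneg_right (mul_le_mul_of_nonneg_left hts.le R.L_pos.le) hs0
      have h2 : R.β * t ^ 2 ≤ 2 * R.L * t * s := by nlinarith [hkey, hss]
      have h3 : R.β * t ≤ 2 * R.L * s := by
        have := (mul_le_mul_iff_left₀ ht0').mp (by nlinarith : R.β * t * t ≤ (2 * R.L * s) * t)
        linarith
      rw [hC, div_mul_eq_mul_div, le_div_iff₀ R.β_pos]
      nlinarith [R.β_pos, hs0]
  -- main argument
  intro x
  set g : EuclideanSpace ℝ (Fin n) := (1 / lam) • R.Dx (p x) x with hg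
  set K : ℝ := (R.L / lam) * (1 + C) with hK
  have hK0 : 0 < K := by
    rw [hK]
    exact mul_pos (div_pos R.L_pos hlam) (by linarith)
  have hinner : ∀ y : EuclideanSpace ℝ (Fin n),
      ⟪g, y - x⟫ = (1/lam) * ⟪R.Dz (p x) x, x - y⟫ := by
    intro y
    rw [hg, real_inner_smul_left, dx_eq, inner_neg_left]
    rw [show x - y = -(y - x) by abel, inner_neg_right]
    try ring
  have hquad : ∀ y : EuclideanSpace ℝ (Fin n),
      |fphi y - fphi x - ⟪g, y - x⟫| ≤ K * ‖y - x‖ ^ 2 := by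
    intro y
    set s := ‖y - x‖ with hs
    have hs0 : (0:ℝ) ≤ s := norm_nonneg _
    -- upper bound
    have hup : fphi y - fphi x - ⟪g, y - x⟫ ≤ (R.L / lam) * s ^ 2 := by
      have h1 : fphi y ≤ f (p x) + (1/lam) * R.φ (p x) y := by
        rw [hfphi y]; exact hp y (p x)
      have h2 := descent (R := R) (p x) (p x) y x
      rw [sub_self] at h2
      rw [show (0:EuclideanSpace ℝ (Fin n)) - (y - x) = -(y - x) by abel,
        inner_neg_right, norm_neg] at h2
      -- h2 : φ(px,y) ≤ φ(px,x) - ⟪Dz(px,x), y-x⟫ + L s²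
      have hin : -⟪R.Dz (p x) x, y - x⟫ = ⟪R.Dz (p x) x, x - y⟫ := by
        rw [show x - y = -(y - x) by abel, inner_neg_right]
      have h3 : (1/lam) * R.φ (p x) y
          ≤ (1/lam) * (R.φ (p x) x + ⟪R.Dz (p x) x, x - y⟫ + R.L * s ^ 2) := by
        apply mul_le_mul_of_nonneg_left _ hil.le
        rw [← hin]
        linarith
      rw [hfphi x, hinner y]
      have : (1/lam) * (R.L * s ^ 2) = (R.L / lam) * s ^ 2 := by ring
      nlinarith [h1, h3]
    -- lower bound
    have hlo : -((R.L / lam) * (C * s ^ 2)) ≤ fphi y - fphi x - ⟪g, y - x⟫ := by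
      have h1 : fphi x ≤ f (p y) + (1/lam) * R.φ (p y) x := by
        rw [hfphi x]; exact hp x (p y)
      have h2 := lower (R := R) (p y) (p y) y x
      rw [sub_self] at h2
      rw [show (0:EuclideanSpace ℝ (Fin n)) - (y - x) = -(y - x) by abel,
        inner_neg_right] at h2
      -- h2 : φ(py,x) - ⟪Dz(py,x), y-x⟫ ≤ φ(py,y)
      have hsplit : ⟪R.Dz (p y) x, y - x⟫
          = ⟪R.Dz (p x) x, y - x⟫ + ⟪R.Dz (p y) x - R.Dz (p x) x, y - x⟫ := by
        rw [inner_sub_left]; ring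
      have hcs : ⟪R.Dz (p y) x - R.Dz (p x) x, y - x⟫
          ≤ ‖R.Dz (p y) x - R.Dz (p x) x‖ * s := real_inner_le_norm _ _
      have hlz : ‖R.Dz (p y) x - R.Dz (p x) x‖ ≤ R.L * (C * s) := by
        have h := dz_lip (R := R) (p y) (p x) x x
        rw [sub_self, sub_zero] at h
        calc ‖R.Dz (p y) x - R.Dz (p x) x‖ ≤ R.L * ‖p y - p x‖ := h
        _ ≤ R.L * (C * s) := mul_le_mul_of_nonneg_left (hplip x y) R.L_pos.le
      have hge : fphi y - fphi x ≥ (1/lam) * ⟪R.Dz (p y) x, -(y - x)⟫ := by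
        have : fphi y - fphi x ≥ (1/lam) * (R.φ (p y) y - R.φ (p y) x) := by
          rw [hfphi y]
          nlinarith [h1]
        rw [inner_neg_right]
        have h4 : (1/lam) * (-⟪R.Dz (p y) x, y - x⟫)
            ≤ (1/lam) * (R.φ (p y) y - R.φ (p y) x) :=
          mul_le_mul_of_nonneg_left (by linarith) hil.le
        linarith
      rw [inner_neg_right] at hge
      rw [hinner y]
      have hin : ⟪R.Dz (p x) x, x - y⟫ = -⟪R.Dz (p x) x, y - x⟫ := by
        rw [show x - y = -(y - x) by abel, inner_neg_right]
      have hprod : ⟪R.Dz (p y) x - R.Dz (p x) x, y - x⟫ ≤ R.L * (C * s) * s := by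
        calc ⟪R.Dz (p y) x - R.Dz (p x) x, y - x⟫
            ≤ ‖R.Dz (p y) x - R.Dz (p x) x‖ * s := hcs
        _ ≤ R.L * (C * s) * s := mul_le_mul_of_nonneg_right hlz hs0
      have hmul : (1/lam) * ⟪R.Dz (p y) x, y - x⟫
          ≤ (1/lam) * (⟪R.Dz (p x) x, y - x⟫ + R.L * (C * s) * s) := by
        apply mul_le_mul_of_nonneg_left _ hil.le
        rw [hsplit]; linarith
      have hexp : (1/lam) * (R.L * (C * s) * s) = (R.L / lam) * (C * s ^ 2) := by
        ring
      nlinarith [hge, hmul]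
    have hb : (R.L / lam) * s ^ 2 ≤ K * s ^ 2 := by
      apply mul_le_mul_of_nonneg_right _ (sq_nonneg s)
      rw [hK]
      nlinarith [div_pos R.L_pos hlam, hC0]
    have hb2 : (R.L / lam) * (C * s ^ 2) ≤ K * s ^ 2 := by
      rw [hK]
      have h := div_pos R.L_pos hlam
      nlinarith [sq_nonneg s]
    rw [abs_le]
    constructor <;> linarith [hup, hlo]
  rw [hasGradientAt_iff_isLittleO]
  rw [Asymptotics.isLittleO_iff]
  intro c hc
  have hball := Metric.ball_mem_nhds x (div_pos hc hK0)
  filter_upwards [hball] with y hy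
  have hdist : ‖y - x‖ < c / K := by
    rw [← dist_eq_norm]
    exact hy
  have h1 := hquad y
  rw [Real.norm_eq_abs]
  have h2 : K * ‖y - x‖ ≤ c := by
    rw [lt_div_iff₀ hK0] at hdist
    nlinarith
  have h3 : K * ‖y - x‖ ^ 2 ≤ c * ‖y - x‖ := by nlinarith [norm_nonneg (y - x)]
  linarith [h1, h3]
end

section
/- The gradient mapping ∇f_φ is globally Lipschitz continuous with constant c = L²/(4βλ); more precisely, ‖∇f_φ(x) - ∇f_φ(x')‖² ≤ (L²/(4βλ)) ⟨∇f_φ(x) - ∇f_φ(x'), x - x'⟩ for all x, x' ∈ ℝⁿ. -/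
open Set Filter Topology RealInnerProductSpace

lemma subgrad_aux {E : Type*} [NormedAddCommGroup E] [InnerProductSpace ℝ E] [CompleteSpace E]
    (f : E → ℝ) (hf : ConvexOn ℝ univ f) (lam : ℝ) (hlam : 0 < lam)
    (h : E → ℝ) (z D : E) (hD : HasGradientAt h D z)
    (hmin : ∀ w, f z + (1 / lam) * h z ≤ f w + (1 / lam) * h w)
    (y : E) : lam * (f z - f y) ≤ ⟪D, y - z⟫ := by
  have hline : HasDerivAt (fun t : ℝ => z + t • (y - z)) (y - z) 0 := by
    simpa using ((hasDerivAt_id (0:ℝ)).smul_const (y - z)).const_add z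
  have hc : HasDerivAt (fun t : ℝ => h (z + t • (y - z))) ⟪D, y - z⟫ 0 := by
    have := (show HasFDerivAt h ((InnerProductSpace.toDual ℝ E) D) (z + (0:ℝ) • (y - z)) by
      simpa using hD.hasFDerivAt).comp_hasDerivAt 0 hline
    simpa [InnerProductSpace.toDual_apply_apply, Function.comp_def] using this
  have hslope := hasDerivAt_iff_tendsto_slope.mp hc
  have hslope' : Tendsto (slope (fun t : ℝ => h (z + t • (y - z))) 0) (𝓝[>] (0:ℝ))
      (𝓝 ⟪D, y - z⟫) :=
    hslope.mono_left (nhdsWithin_mono _ (fun t ht => by simpa using ne_of_gt ht))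
  refine ge_of_tendsto hslope' ?_
  filter_upwards [Ioo_mem_nhdsGT_of_mem (α := ℝ)
    (show (0:ℝ) ∈ Ico 0 1 by constructor <;> norm_num)] with t ht
  obtain ⟨ht0, ht1⟩ := ht
  have hconv : f (z + t • (y - z)) ≤ (1 - t) * f z + t * f y := by
    have h2 := hf.2 (mem_univ z) (mem_univ y) (by linarith : (0:ℝ) ≤ 1 - t) ht0.le (by ring)
    have he : (1 - t) • z + t • y = z + t • (y - z) := by
      simp [smul_sub, sub_smul]; module
    simpa [he, smul_eq_mul] using h2
  have hm := hmin (z + t • (y - z))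
  have hm1 : lam * f z + h z ≤ lam * f (z + t • (y - z)) + h (z + t • (y - z)) := by
    have := mul_le_mul_of_nonneg_left hm hlam.le
    have hl : lam ≠ 0 := hlam.ne'
    field_simp at this
    linarith
  have hc1 := mul_le_mul_of_nonneg_left hconv hlam.le
  rw [slope_def_field]
  rw [show (z + (0:ℝ) • (y - z)) = z by simp, sub_zero, le_div_iff₀ ht0]
  nlinarith

/-- the gradient mapping `∇f_φ` satisfies
`‖∇f_φ(x) - ∇f_φ(x')‖² ≤ (L²/(4βλ)) ⟨∇f_φ(x) - ∇f_φ(x'), x - x'⟩`, and hence is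
globally Lipschitz with constant `c = L²/(4βλ)`. -/
theorem phi_regularization_gradient_lipschitz (n : ℕ) (R : PhiRegular n)
    (f : EuclideanSpace ℝ (Fin n) → ℝ) (hf : ConvexOn ℝ univ f)
    (lam : ℝ) (hlam : 0 < lam)
    (p : EuclideanSpace ℝ (Fin n) → EuclideanSpace ℝ (Fin n))
    (hp : ∀ x z, f (p x) + (1 / lam) * R.φ (p x) x ≤ f z + (1 / lam) * R.φ z x)
    (g : EuclideanSpace ℝ (Fin n) → EuclideanSpace ℝ (Fin n))
    (hg : ∀ x, g x = (1 / lam) • R.Dx (p x) x) :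
    (∀ x x', ‖g x - g x'‖ ^ 2 ≤ R.L ^ 2 / (4 * R.β * lam) * ⟪g x - g x', x - x'⟫) ∧
    (∀ x x', ‖g x - g x'‖ ≤ R.L ^ 2 / (4 * R.β * lam) * ‖x - x'‖) := by
  have hb := R.β_pos
  have hln : lam ≠ 0 := hlam.ne'
  have hbn : R.β ≠ 0 := R.β_pos.ne'
  have hc_nonneg : 0 ≤ R.L ^ 2 / (4 * R.β * lam) := by positivity
  have main : ∀ x x', ‖g x - g x'‖ ^ 2 ≤ R.L ^ 2 / (4 * R.β * lam) * ⟪g x - g x', x - x'⟫ := by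
    intro x x'
    set z := p x with hz
    set z' := p x' with hz'
    set a := R.Dx z x with ha
    set a' := R.Dx z' x' with ha'
    set u := a' - a with hu
    set w := (z' - z) - (x' - x) with hw
    have s1 := subgrad_aux f hf lam hlam (fun z0 => R.φ z0 x) z (R.Dz z x)
      (R.gradZ z x) (fun w0 => hp x w0) z'
    have s2 := subgrad_aux f hf lam hlam (fun z0 => R.φ z0 x') z' (R.Dz z' x')
      (R.gradZ z' x') (fun w0 => hp x' w0) z
    have e1 : ⟪R.Dz z x, z' - z⟫ = -⟪a, z' - z⟫ := by
      rw [R.skew, inner_neg_left]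
    have e2 : ⟪R.Dz z' x', z - z'⟫ = ⟪a', z' - z⟫ := by
      rw [R.skew, show z - z' = -(z' - z) by abel, inner_neg_left, inner_neg_right, neg_neg]
    have eu : ⟪u, z' - z⟫ = ⟪a', z' - z⟫ - ⟪a, z' - z⟫ := inner_sub_left _ _ _
    have hsum : lam * (f z - f z') + lam * (f z' - f z) = 0 := by ring
    have mono : 0 ≤ ⟪u, z' - z⟫ := by
      linarith [s1, s2]
    have st1 := R.strong z' z x' x
    have st2 := R.strong z z' x x'
    have hww : ‖(z - z') - (x - x')‖ = ‖w‖ := by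
      rw [show (z - z') - (x - x') = -w by rw [hw]; abel, norm_neg]
    have e4 : ⟪a', x - x'⟫ = -⟪a', x' - x⟫ := by
      rw [show x - x' = -(x' - x) by abel, inner_neg_right]
    have eux : ⟪u, x' - x⟫ = ⟪a', x' - x⟫ - ⟪a, x' - x⟫ := inner_sub_left _ _ _
    have hIu : 2 * R.β * ‖w‖ ^ 2 ≤ ⟪u, x' - x⟫ := by
      rw [e1] at st1
      rw [e2, e4, hww] at st2
      linarith [st1, st2]
    have lp := R.lip z' z x' x
    have hDz : ‖R.Dz z' x' - R.Dz z x‖ = ‖u‖ := by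
      rw [R.skew, R.skew, show -a' - -a = -u by rw [hu]; abel, norm_neg]
    have lipu : 2 * ‖u‖ ^ 2 ≤ R.L ^ 2 * ‖w‖ ^ 2 := by
      rw [hDz] at lp
      linarith [lp]
    have hfin : ‖u‖ ^ 2 * (4 * R.β) ≤ R.L ^ 2 * ⟪u, x' - x⟫ := by
      nlinarith [mul_le_mul_of_nonneg_left hIu (sq_nonneg R.L),
        mul_le_mul_of_nonneg_left lipu R.β_pos.le]
    have hstep : ‖u‖ ^ 2 ≤ R.L ^ 2 / (4 * R.β) * ⟪u, x' - x⟫ := by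
      rw [div_mul_eq_mul_div, le_div_iff₀ (by positivity : (0:ℝ) < 4 * R.β)]
      linarith [hfin]
    have hgd : g x - g x' = (1 / lam) • (a - a') := by rw [hg, hg, ← smul_sub]
    have en : ‖g x - g x'‖ = (1 / lam) * ‖u‖ := by
      rw [hgd, norm_smul, show a - a' = -u by rw [hu]; abel, norm_neg,
        Real.norm_eq_abs, abs_of_pos (one_div_pos.mpr hlam)]
    have eaux : ⟪(a - a' : EuclideanSpace ℝ (Fin n)), x - x'⟫ = ⟪u, x' - x⟫ := by
      rw [show a - a' = -u by rw [hu]; abel, show x - x' = -(x' - x) by abel,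
        inner_neg_left, inner_neg_right, neg_neg]
    have ei : ⟪g x - g x', x - x'⟫ = (1 / lam) * ⟪u, x' - x⟫ := by
      rw [hgd, real_inner_smul_left, eaux]
    calc ‖g x - g x'‖ ^ 2 = (1 / lam) ^ 2 * ‖u‖ ^ 2 := by rw [en]; ring
      _ ≤ (1 / lam) ^ 2 * (R.L ^ 2 / (4 * R.β) * ⟪u, x' - x⟫) :=
          mul_le_mul_of_nonneg_left hstep (by positivity)
      _ = R.L ^ 2 / (4 * R.β * lam) * ((1 / lam) * ⟪u, x' - x⟫) := by
          have halg : ∀ I : ℝ, (1 / lam) ^ 2 * (R.L ^ 2 / (4 * R.β) * I)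
              = R.L ^ 2 / (4 * R.β * lam) * ((1 / lam) * I) := by
            intro I; simp [div_eq_mul_inv, mul_inv]; ring
          exact halg _
      _ = R.L ^ 2 / (4 * R.β * lam) * ⟪g x - g x', x - x'⟫ := by rw [ei]
  refine ⟨main, fun x x' => ?_⟩
  have h1 := main x x'
  have h2 : ⟪g x - g x', x - x'⟫ ≤ ‖g x - g x'‖ * ‖x - x'‖ := real_inner_le_norm _ _
  rcases eq_or_lt_of_le (norm_nonneg (g x - g x')) with hzero | hpos
  · rw [← hzero]; positivity
  · have h3 : ‖g x - g x'‖ ^ 2 ≤ R.L ^ 2 / (4 * R.β * lam) * (‖g x - g x'‖ * ‖x - x'‖) :=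
      h1.trans (mul_le_mul_of_nonneg_left h2 hc_nonneg)
    rw [sq] at h3
    have he : R.L ^ 2 / (4 * R.β * lam) * (‖g x - g x'‖ * ‖x - x'‖)
        = ‖g x - g x'‖ * (R.L ^ 2 / (4 * R.β * lam) * ‖x - x'‖) := by ring
    exact le_of_mul_le_mul_left (by linarith) hpos
end

section
/- For all x, x' ∈ ℝⁿ, ⟨∇f_φ(x) - ∇f_φ(x'), x - x'⟩ + ⟨∇f_φ(x) - ∇f_φ(x'), p(x') - p(x)⟩ ≥ (2β/λ)‖(p(x) - p(x')) - (x - x')‖². -/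
open Set Filter Topology RealInnerProductSpace

/-- the key strong-monotonicity estimate
`⟨∇f_φ(x) - ∇f_φ(x'), x - x'⟩ + ⟨∇f_φ(x) - ∇f_φ(x'), p(x') - p(x)⟩
  ≥ (2β/λ) ‖(p(x) - p(x')) - (x - x')‖²`. -/
theorem phi_regularization_strong_monotonicity (n : ℕ) (R : PhiRegular n)
    (f : EuclideanSpace ℝ (Fin n) → ℝ) (hf : ConvexOn ℝ univ f)
    (lam : ℝ) (hlam : 0 < lam)
    (p : EuclideanSpace ℝ (Fin n) → EuclideanSpace ℝ (Fin n))
    (hp : ∀ x z, f (p x) + (1 / lam) * R.φ (p x) x ≤ f z + (1 / lam) * R.φ z x)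
    (g : EuclideanSpace ℝ (Fin n) → EuclideanSpace ℝ (Fin n))
    (hg : ∀ x, g x = (1 / lam) • R.Dx (p x) x) :
    ∀ x x', 2 * R.β / lam * ‖(p x - p x') - (x - x')‖ ^ 2
      ≤ ⟪g x - g x', x - x'⟫ + ⟪g x - g x', p x' - p x⟫ := by
  intro x x'
  have h1 := R.strong (p x') (p x) x' x
  have h2 := R.strong (p x) (p x') x x'
  rw [R.skew] at h1 h2
  have hn : ‖(p x' - p x) - (x' - x)‖ = ‖(p x - p x') - (x - x')‖ := by
    rw [← norm_neg]; congr 1; abel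
  rw [hn] at h1
  have key : 2 * R.β * ‖(p x - p x') - (x - x')‖ ^ 2
      ≤ ⟪R.Dx (p x) x - R.Dx (p x') x', x - x'⟫
        + ⟪R.Dx (p x) x - R.Dx (p x') x', p x' - p x⟫ := by
    simp only [inner_neg_left, inner_sub_left] at h1 h2 ⊢
    have e1 : ⟪R.Dx (p x) x, p x' - p x⟫ = -⟪R.Dx (p x) x, p x - p x'⟫ := by
      rw [← inner_neg_right]; congr 1; abel
    have e2 : ⟪R.Dx (p x') x', x' - x⟫ = -⟪R.Dx (p x') x', x - x'⟫ := by
      rw [← inner_neg_right]; congr 1; abel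
    have e3 : ⟪R.Dx (p x') x', p x' - p x⟫ = -⟪R.Dx (p x') x', p x - p x'⟫ := by
      rw [← inner_neg_right]; congr 1; abel
    have e4 : ⟪R.Dx (p x) x, x' - x⟫ = -⟪R.Dx (p x) x, x - x'⟫ := by
      rw [← inner_neg_right]; congr 1; abel
    linarith
  have h3 : g x - g x' = (1 / lam) • (R.Dx (p x) x - R.Dx (p x') x') := by
    rw [hg, hg, smul_sub]
  rw [h3, real_inner_smul_left, real_inner_smul_left]
  have hN : (0:ℝ) ≤ ‖(p x - p x') - (x - x')‖ ^ 2 := sq_nonneg _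
  have hil : (0:ℝ) < 1 / lam := by positivity
  have := mul_le_mul_of_nonneg_left key hil.le
  calc 2 * R.β / lam * ‖(p x - p x') - (x - x')‖ ^ 2
      = 1 / lam * (2 * R.β * ‖(p x - p x') - (x - x')‖ ^ 2) := by ring
    _ ≤ _ := by linarith
end

section
/- If f(x) = f_φ(x), then x minimizes f over ℝⁿ. -/
open Set Filter Topology RealInnerProductSpace

/-- if `f(x) = f_φ(x)`, then `x` minimizes `f` over ℝⁿ. -/
theorem min_of_f_eq_fphi (n : ℕ) (R : PhiRegular n)
    (f : EuclideanSpace ℝ (Fin n) → ℝ) (hf : ConvexOn ℝ univ f)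
    (lam : ℝ) (hlam : 0 < lam)
    (p : EuclideanSpace ℝ (Fin n) → EuclideanSpace ℝ (Fin n))
    (hp : ∀ x z, f (p x) + (1 / lam) * R.φ (p x) x ≤ f z + (1 / lam) * R.φ z x)
    (fphi : EuclideanSpace ℝ (Fin n) → ℝ)
    (hfphi : ∀ x, fphi x = f (p x) + (1 / lam) * R.φ (p x) x)
    (x : EuclideanSpace ℝ (Fin n)) (hx : f x = fphi x) :
    ∀ z, f x ≤ f z := by
  intro z
  -- Dz y y = 0
  have hDz0 : ∀ y : EuclideanSpace ℝ (Fin n), R.Dz y y = 0 := by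
    intro y
    have hmin : IsLocalMin (fun z' => R.φ z' y) y := by
      apply Filter.Eventually.of_forall
      intro z'
      simp only
      rw [(R.eq_zero_iff y y).2 rfl]
      exact R.nonneg z' y
    have h0 := hmin.hasFDerivAt_eq_zero ((R.gradZ y y).hasFDerivAt)
    have h1 : ⟪R.Dz y y, R.Dz y y⟫ = 0 := by
      have := congrArg (fun L : StrongDual ℝ (EuclideanSpace ℝ (Fin n)) => L (R.Dz y y)) h0
      simpa [InnerProductSpace.toDual_apply_apply] using this
    exact inner_self_eq_zero.mp h1
  have hxx : R.φ x x = 0 := (R.eq_zero_iff x x).2 rfl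
  have key : ∀ t : ℝ, t ∈ Set.Ioc (0:ℝ) 1 →
      f x ≤ f z + (R.L / lam * ‖z - x‖ ^ 2) * t := by
    intro t ht
    set zt := x + t • (z - x) with hzt
    have hnorm : ‖zt - x‖ = t * ‖z - x‖ := by
      simp [hzt, norm_smul, abs_of_pos ht.1]
    have hgrad : ‖R.Dz zt x‖ ≤ R.L * ‖zt - x‖ := by
      have h1 := R.lip zt x x x
      simp only [sub_self, sub_zero, hDz0 x] at h1
      have h2 : ‖R.Dz zt x‖ ^ 2 ≤ (R.L * ‖zt - x‖) ^ 2 := by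
        nlinarith [sq_nonneg ‖R.Dx zt x - R.Dx x x‖]
      have hLn : 0 ≤ R.L * ‖zt - x‖ := mul_nonneg R.L_pos.le (norm_nonneg _)
      nlinarith [norm_nonneg (R.Dz zt x)]
    have hphi : R.φ zt x ≤ R.L * ‖zt - x‖ ^ 2 := by
      have hs := R.strong x zt x x
      simp only [sub_self, sub_zero, hxx] at hs
      have hc : ⟪R.Dz zt x, x - zt⟫ = - ⟪R.Dz zt x, zt - x⟫ := by
        rw [← inner_neg_right]; congr 1; abel
      have hcs : ⟪R.Dz zt x, zt - x⟫ ≤ ‖R.Dz zt x‖ * ‖zt - x‖ := real_inner_le_norm _ _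
      have hin0 : ⟪R.Dx zt x, (0 : EuclideanSpace ℝ (Fin n))⟫ = 0 := inner_zero_right _
      have hnn : 0 ≤ R.β * ‖x - zt‖ ^ 2 := mul_nonneg R.β_pos.le (sq_nonneg _)
      nlinarith [mul_le_mul_of_nonneg_right hgrad (norm_nonneg (zt - x))]
    have hconv : f zt ≤ (1 - t) * f x + t * f z := by
      have h := hf.2 (mem_univ x) (mem_univ z)
        (by linarith [ht.2] : (0:ℝ) ≤ 1 - t) ht.1.le (by ring)
      have hzt' : (1 - t) • x + t • z = zt := by
        rw [hzt]; module
      rw [hzt'] at h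
      simpa using h
    have h1 : f x ≤ f zt + (1 / lam) * R.φ zt x := by
      calc f x = f (p x) + (1 / lam) * R.φ (p x) x := by rw [hx, hfphi]
        _ ≤ f zt + (1 / lam) * R.φ zt x := hp x zt
    have hlami : 0 < 1 / lam := by positivity
    have h2 : f x ≤ (1 - t) * f x + t * f z + (1 / lam) * (R.L * ‖zt - x‖ ^ 2) := by
      have := mul_le_mul_of_nonneg_left hphi hlami.le
      linarith
    rw [hnorm] at h2
    have ht0 := ht.1
    have heq : (1 / lam) * (R.L * (t * ‖z - x‖) ^ 2)
        = (R.L / lam * ‖z - x‖ ^ 2) * t * t := by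
      field_simp
    have h3 : t * f x ≤ t * f z + (R.L / lam * ‖z - x‖ ^ 2) * t * t := by
      rw [heq] at h2; linarith
    nlinarith
  -- conclude via ε
  have hC : 0 ≤ R.L / lam * ‖z - x‖ ^ 2 :=
    mul_nonneg (div_nonneg R.L_pos.le hlam.le) (sq_nonneg _)
  set C := R.L / lam * ‖z - x‖ ^ 2 with hCdef
  have : ∀ ε > (0:ℝ), f x ≤ f z + ε := by
    intro ε hε
    have ht : min 1 (ε / (C + 1)) ∈ Set.Ioc (0:ℝ) 1 := by
      constructor
      · exact lt_min one_pos (div_pos hε (by linarith))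
      · exact min_le_left _ _
    have h := key _ ht
    have : C * min 1 (ε / (C + 1)) ≤ ε := by
      have h1 : min 1 (ε / (C + 1)) ≤ ε / (C + 1) := min_le_right _ _
      have h2 : C * min 1 (ε / (C + 1)) ≤ C * (ε / (C + 1)) :=
        mul_le_mul_of_nonneg_left h1 hC
      have h3 : C * (ε / (C + 1)) ≤ ε := by
        rw [div_eq_mul_inv]
        rw [mul_comm ε]
        rw [← mul_assoc]
        have : C * (C+1)⁻¹ ≤ 1 := by
          rw [mul_inv_le_iff₀ (by linarith)]
          linarith
        nlinarith
      linarith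
    linarith
  exact le_of_forall_pos_le_add this
end

section
/- The following are equivalent for x ∈ ℝⁿ: (A1) x minimizes f; (A2) x = p(x); (A3) ∇f_φ(x) = 0; (A4) x minimizes f_φ; (A5) f(x) = f(p(x)); (A6) f(x) = f_φ(x). -/
open Set Filter Topology RealInnerProductSpace

lemma PhiRegular.diag_zero {n : ℕ} (R : PhiRegular n) (y : EuclideanSpace ℝ (Fin n)) :
    R.Dz y y = 0 := by
  have hmin : IsLocalMin (fun z => R.φ z y) y := by
    apply Filter.Eventually.of_forall
    intro z
    simp only
    rw [(R.eq_zero_iff y y).2 rfl]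
    exact R.nonneg z y
  have h0 := hmin.hasFDerivAt_eq_zero (R.gradZ y y).hasFDerivAt
  have := congrArg (InnerProductSpace.toDual ℝ (EuclideanSpace ℝ (Fin n))).symm h0
  simpa using this

lemma PhiRegular.quad_bound {n : ℕ} (R : PhiRegular n)
    (z x : EuclideanSpace ℝ (Fin n)) : R.φ z x ≤ R.L * ‖z - x‖ ^ 2 := by
  have hs := R.strong x z x x
  have hl := R.lip z x x x
  rw [(R.eq_zero_iff x x).2 rfl] at hs
  simp only [sub_self, inner_zero_right, sub_zero] at hs hl
  rw [R.diag_zero x] at hl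
  simp only [sub_zero] at hl
  have hl' : ‖R.Dz z x‖ ^ 2 ≤ R.L ^ 2 * ‖z - x‖ ^ 2 := by
    nlinarith [sq_nonneg ‖R.Dx z x - R.Dx x x‖]
  have ha : ‖R.Dz z x‖ ≤ R.L * ‖z - x‖ := by
    nlinarith [norm_nonneg (R.Dz z x), mul_nonneg R.L_pos.le (norm_nonneg (z - x))]
  have hi := abs_real_inner_le_norm (R.Dz z x) (x - z)
  rw [norm_sub_rev] at hi
  have habs := neg_abs_le ⟪R.Dz z x, x - z⟫
  have hb : ‖x - z‖ = ‖z - x‖ := norm_sub_rev _ _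
  rw [hb] at hs
  nlinarith [norm_nonneg (z - x), R.β_pos, sq_nonneg ‖z - x‖]

lemma key_min {n : ℕ} (R : PhiRegular n)
    (f : EuclideanSpace ℝ (Fin n) → ℝ) (hf : ConvexOn ℝ univ f)
    (lam : ℝ) (hlam : 0 < lam) (x : EuclideanSpace ℝ (Fin n))
    (H : ∀ z, f x ≤ f z + (1 / lam) * R.φ z x) : ∀ z, f x ≤ f z := by
  intro z
  have hC : (0:ℝ) ≤ (1 / lam) * R.L * ‖z - x‖ ^ 2 := by
    have := R.L_pos
    positivity
  set C : ℝ := (1 / lam) * R.L * ‖z - x‖ ^ 2 with hCdef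
  refine le_of_forall_pos_le_add ?_
  intro ε hε
  set t : ℝ := min 1 (ε / (C + 1)) with htdef
  have ht0 : 0 < t := lt_min one_pos (div_pos hε (by linarith))
  have ht1 : t ≤ 1 := min_le_left _ _
  have htε : C * t ≤ ε := by
    have h1 : t ≤ ε / (C + 1) := min_le_right _ _
    have h2 : C * t ≤ C * (ε / (C + 1)) := by nlinarith
    have h3 : C * (ε / (C + 1)) ≤ ε := by
      rw [mul_div_assoc', div_le_iff₀ (by linarith : (0:ℝ) < C + 1)]
      nlinarith
    linarith
  set w : EuclideanSpace ℝ (Fin n) := (1 - t) • x + t • z with hwdef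
  have hconv : f w ≤ (1 - t) * f x + t * f z := by
    have := hf.2 (mem_univ x) (mem_univ z) (by linarith : (0:ℝ) ≤ 1 - t) ht0.le (by ring)
    simpa using this
  have hwx : w - x = t • (z - x) := by
    rw [hwdef]; module
  have hq : R.φ w x ≤ R.L * (t ^ 2 * ‖z - x‖ ^ 2) := by
    have := R.quad_bound w x
    rw [hwx, norm_smul] at this
    simp only [Real.norm_eq_abs, abs_of_pos ht0] at this
    nlinarith
  have hH := H w
  have hfin : t * f x ≤ t * f z + t * (C * t) := by
    have hlam' : 0 < 1 / lam := by positivity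
    nlinarith
  have hfin2 : t * f x ≤ t * (f z + C * t) := by linarith [hfin]; 
  have := (mul_le_mul_iff_right₀ ht0).mp hfin2
  linarith

/-- Proposition 2: the statements (A1)–(A6) are equivalent. -/
theorem optimality_tfae (n : ℕ) (R : PhiRegular n)
    (f : EuclideanSpace ℝ (Fin n) → ℝ) (hf : ConvexOn ℝ univ f)
    (lam : ℝ) (hlam : 0 < lam)
    (p : EuclideanSpace ℝ (Fin n) → EuclideanSpace ℝ (Fin n))
    (hp : ∀ x z, f (p x) + (1 / lam) * R.φ (p x) x ≤ f z + (1 / lam) * R.φ z x)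
    (fphi : EuclideanSpace ℝ (Fin n) → ℝ)
    (hfphi : ∀ x, fphi x = f (p x) + (1 / lam) * R.φ (p x) x)
    (x : EuclideanSpace ℝ (Fin n)) :
    [(∀ z, f x ≤ f z),                       -- (A1) x minimizes f
     x = p x,                                 -- (A2)
     (1 / lam) • R.Dx (p x) x = 0,            -- (A3) ∇f_φ(x) = 0
     (∀ y, fphi x ≤ fphi y),                  -- (A4) x minimizes f_φ
     f x = f (p x),                           -- (A5)
     f x = fphi x].TFAE := by                 -- (A6)
  have hlam' : (0:ℝ) < 1 / lam := by positivity
  have hφxx : R.φ x x = 0 := (R.eq_zero_iff x x).2 rfl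
  have hnn := R.nonneg (p x) x
  -- from φ (p x) x = 0 conclude x = p x
  have hzero_imp : R.φ (p x) x = 0 → x = p x := fun h => ((R.eq_zero_iff _ _).1 h).symm
  tfae_have 1 → 4 := by
    intro h1 y
    have hx : fphi x ≤ f x := by
      rw [hfphi]
      calc f (p x) + (1 / lam) * R.φ (p x) x ≤ f x + (1 / lam) * R.φ x x := hp x x
        _ = f x := by rw [hφxx]; ring
    have hy : f x ≤ fphi y := by
      rw [hfphi]
      have := R.nonneg (p y) y
      have := h1 (p y)
      nlinarith
    linarith
  tfae_have 4 → 2 := by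
    intro h4
    apply hzero_imp
    have h1 : fphi x ≤ fphi (p x) := h4 (p x)
    have h2 : fphi (p x) ≤ f (p x) := by
      rw [hfphi]
      calc f (p (p x)) + (1 / lam) * R.φ (p (p x)) (p x)
          ≤ f (p x) + (1 / lam) * R.φ (p x) (p x) := hp (p x) (p x)
        _ = f (p x) := by rw [(R.eq_zero_iff _ _).2 rfl]; ring
    rw [hfphi] at h1
    nlinarith
  tfae_have 2 → 6 := by
    intro h2
    rw [hfphi, ← h2, hφxx]
    ring
  tfae_have 6 → 1 := by
    intro h6
    apply key_min R f hf lam hlam x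
    intro z
    rw [h6, hfphi]
    exact hp x z
  tfae_have 2 → 5 := fun h2 => congrArg f h2
  tfae_have 5 → 2 := by
    intro h5
    apply hzero_imp
    have := hp x x
    rw [hφxx] at this
    nlinarith
  tfae_have 2 → 3 := by
    intro h2
    have hz := R.diag_zero x
    rw [R.skew] at hz
    have hxx : R.Dx x x = 0 := by linear_combination (norm := module) -hz
    rw [← h2, hxx, smul_zero]
  tfae_have 3 → 2 := by
    intro h3
    have hDx : R.Dx (p x) x = 0 := by
      rcases smul_eq_zero.1 h3 with h | h
      · exact absurd h (by positivity)
      · exact h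
    have hDz : R.Dz (p x) x = 0 := by rw [R.skew, hDx, neg_zero]
    have hs := R.strong x (p x) x x
    rw [hDz, hφxx, hDx] at hs
    simp only [inner_zero_left, sub_self, sub_zero] at hs
    have hnx : ‖x - p x‖ ^ 2 ≤ 0 := by nlinarith [R.β_pos]
    have : x - p x = 0 := by
      have := sq_nonneg ‖x - p x‖
      have h0 : ‖x - p x‖ = 0 := by nlinarith [norm_nonneg (x - p x)]
      exact norm_eq_zero.1 h0
    linear_combination (norm := module) this
  tfae_finish
end

section
/- Let pᵃ(x,ε) satisfy f(pᵃ(x,ε)) + (1/λ)φ(pᵃ(x,ε),x) ≤ f_φ(x) + ε and define gᵃ(x,ε) = (1/λ)∇_x φ(pᵃ(x,ε), x). Then ‖gᵃ(x,ε) - ∇f_φ(x)‖ ≤ √(L²ε/(βλ)). -/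
open Set Filter Topology RealInnerProductSpace

/-- Lemma 2, (12): `‖gᵃ(x,ε) - ∇f_φ(x)‖ ≤ √(L²ε/(βλ))`, where
`gᵃ(x,ε) = (1/λ) ∇_x φ(pᵃ(x,ε), x)` and `∇f_φ(x) = (1/λ) ∇_x φ(p(x), x)`. -/
theorem approx_gradient_dist (n : ℕ) (R : PhiRegular n)
    (f : EuclideanSpace ℝ (Fin n) → ℝ) (hf : ConvexOn ℝ univ f)
    (lam : ℝ) (hlam : 0 < lam) (ε : ℝ) (hε : 0 < ε)
    (p : EuclideanSpace ℝ (Fin n) → EuclideanSpace ℝ (Fin n))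
    (hp : ∀ x z, f (p x) + (1 / lam) * R.φ (p x) x ≤ f z + (1 / lam) * R.φ z x)
    (fphi : EuclideanSpace ℝ (Fin n) → ℝ)
    (hfphi : ∀ x, fphi x = f (p x) + (1 / lam) * R.φ (p x) x)
    (x pa : EuclideanSpace ℝ (Fin n))
    (hpa : f pa + (1 / lam) * R.φ pa x ≤ fphi x + ε) :
    ‖(1 / lam) • R.Dx pa x - (1 / lam) • R.Dx (p x) x‖
      ≤ Real.sqrt (R.L ^ 2 * ε / (R.β * lam)) := by
  set d := pa - p x with hd
  set C := ‖d‖ ^ 2 with hCdef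
  have hC0 : 0 ≤ C := by positivity
  -- Step 1: for every t ∈ (0,1), (β/λ)(1-t)C ≤ ε
  have key : ∀ t ∈ Set.Ioo (0:ℝ) 1, (R.β / lam) * (1 - t) * C ≤ ε := by
    intro t ht
    obtain ⟨ht0, ht1⟩ := ht
    have h1t : 0 < 1 - t := by linarith
    set zt := p x + t • d with hzt
    have hz1 : p x - zt = -(t • d) := by rw [hzt]; abel
    have hz2 : pa - zt = (1 - t) • d := by
      rw [hzt, sub_smul, one_smul, hd]; abel
    have hzconv : zt = (1 - t) • p x + t • pa := by
      rw [hzt, hd]; module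
    have hs1 := R.strong (p x) zt x x
    have hs2 := R.strong pa zt x x
    simp only [sub_self, inner_zero_right, sub_zero, add_zero, hz1, hz2] at hs1 hs2
    rw [inner_neg_right, real_inner_smul_right, norm_neg, norm_smul,
      Real.norm_eq_abs, abs_of_pos ht0] at hs1
    rw [real_inner_smul_right, norm_smul, Real.norm_eq_abs, abs_of_pos h1t] at hs2
    have hn1 : (t * ‖d‖) ^ 2 = t ^ 2 * C := by rw [hCdef]; ring
    have hn2 : ((1 - t) * ‖d‖) ^ 2 = (1 - t) ^ 2 * C := by rw [hCdef]; ring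
    rw [hn1] at hs1
    rw [hn2] at hs2
    -- combine strong convexity inequalities
    have h1 := mul_le_mul_of_nonneg_left hs1 h1t.le
    have h2 := mul_le_mul_of_nonneg_left hs2 ht0.le
    have hφ : R.φ zt x + R.β * (t * (1 - t) * C) ≤ (1 - t) * R.φ (p x) x + t * R.φ pa x := by
      ring_nf at h1 h2 ⊢
      linarith [h1, h2]
    have hconv := hf.2 (Set.mem_univ (p x)) (Set.mem_univ pa) h1t.le ht0.le
      (by ring : (1 - t) + t = 1)
    rw [← hzconv] at hconv
    simp only [smul_eq_mul] at hconv
    have hmin := hp x zt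
    have hε' : f pa + (1 / lam) * R.φ pa x ≤ f (p x) + (1 / lam) * R.φ (p x) x + ε := by
      rw [hfphi x] at hpa; linarith
    have hlaminv : 0 < 1 / lam := by positivity
    have hφ' := mul_le_mul_of_nonneg_left hφ hlaminv.le
    have hε'' := mul_le_mul_of_nonneg_left hε' ht0.le
    have step1 : (1 / lam) * (R.β * (t * (1 - t) * C)) ≤ t * ε := by
      ring_nf at hmin hconv hφ' hε'' ⊢
      linarith [hmin, hconv, hφ', hε'']
    rw [← mul_le_mul_iff_right₀ ht0]
    calc t * ((R.β / lam) * (1 - t) * C) = (1 / lam) * (R.β * (t * (1 - t) * C)) := by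
          field_simp
      _ ≤ t * ε := step1
  -- Step 2: take limit t → 0⁺
  have hC : (R.β / lam) * C ≤ ε := by
    have htend : Filter.Tendsto (fun t : ℝ => (R.β / lam) * (1 - t) * C) (nhdsWithin 0 (Set.Ioi 0))
        (nhds ((R.β / lam) * C)) := by
      have hcont : Continuous (fun t : ℝ => (R.β / lam) * (1 - t) * C) := by continuity
      have := hcont.tendsto 0
      simp only [sub_zero, mul_one] at this
      exact this.mono_left nhdsWithin_le_nhds
    refine le_of_tendsto htend ?_
    filter_upwards [Ioo_mem_nhdsGT_of_mem (Set.left_mem_Ico.mpr one_pos)] with t ht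
      using key t ht
  have hd2 : C ≤ lam * ε / R.β := by
    rw [le_div_iff₀ R.β_pos]
    have h := mul_le_mul_of_nonneg_left hC hlam.le
    calc C * R.β = lam * ((R.β / lam) * C) := by field_simp
      _ ≤ lam * ε := h
  -- Step 3: gradient Lipschitz bound
  have hlip := R.lip pa (p x) x x
  simp only [sub_self, sub_zero] at hlip
  have hDx : ‖R.Dx pa x - R.Dx (p x) x‖ ^ 2 ≤ R.L ^ 2 * C := by
    nlinarith [sq_nonneg (‖R.Dz pa x - R.Dz (p x) x‖)]
  -- Conclude
  rw [← smul_sub, norm_smul, Real.norm_eq_abs, abs_of_pos (by positivity : (0:ℝ) < 1/lam)]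
  apply Real.le_sqrt_of_sq_le
  have h1 : ‖R.Dx pa x - R.Dx (p x) x‖ ^ 2 ≤ R.L ^ 2 * (lam * ε / R.β) :=
    le_trans hDx (mul_le_mul_of_nonneg_left hd2 (by positivity))
  calc (1 / lam * ‖R.Dx pa x - R.Dx (p x) x‖) ^ 2
      = (1 / lam ^ 2) * ‖R.Dx pa x - R.Dx (p x) x‖ ^ 2 := by ring
    _ ≤ (1 / lam ^ 2) * (R.L ^ 2 * (lam * ε / R.β)) :=
        mul_le_mul_of_nonneg_left h1 (by positivity)
    _ = R.L ^ 2 * ε / (R.β * lam) := by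
        have h : lam ≠ 0 := hlam.ne'
        have hb : R.β ≠ 0 := R.β_pos.ne'
        field_simp
end

section
/- Suppose x̄ is an optimal solution of min_{x∈ℝⁿ} f_φ(x), where f_φ is convex and differentiable with Lipschitz gradient g = ∇f_φ, and g is BD-regular at x̄ (every matrix in ∂_B g(x̄) is nonsingular). Then x̄ is the unique optimal solution. -/
open Set Filter Topology RealInnerProductSpace

/-- The B-subdifferential `∂_B g(x)` of `g` at `x`: the set of (continuous linear) maps
arising as limits `A = lim ∇g(xᵏ)` along sequences `xᵏ → x` of differentiability points. -/
def BSubdiff {n : ℕ} (g : EuclideanSpace ℝ (Fin n) → EuclideanSpace ℝ (Fin n))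
    (x : EuclideanSpace ℝ (Fin n)) :
    Set (EuclideanSpace ℝ (Fin n) →L[ℝ] EuclideanSpace ℝ (Fin n)) :=
  {A | ∃ u : ℕ → EuclideanSpace ℝ (Fin n),
    (∀ k, DifferentiableAt ℝ g (u k)) ∧
    Tendsto u atTop (𝓝 x) ∧
    Tendsto (fun k => fderiv ℝ g (u k)) atTop (𝓝 A)}

section Aux

open MeasureTheory intervalIntegral

set_option maxHeartbeats 1000000

/-- Fatou-type inequality: monotone continuous `f` with a.e. derivative `≥ c` on `(a,b)`. -/
lemma mono_fatou {f : ℝ → ℝ} (hf : Monotone f) (hcont : Continuous f) {a b c : ℝ}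
    (hab : a < b) (hc : 0 ≤ c)
    (H : ∀ᵐ t, t ∈ Set.Ioo a b → ∃ D, HasDerivAt f D t ∧ c ≤ D) :
    c * (b - a) ≤ f b - f a := by
  set δ : ℕ → ℝ := fun j => (b - a) / (j + 2) with hδ
  have hδpos : ∀ j, 0 < δ j := fun j => div_pos (by linarith) (by positivity)
  have hδle : ∀ j, δ j ≤ b - a := by
    intro j
    rw [hδ]
    calc (b-a)/(j+2:ℝ) ≤ (b-a)/1 := by
          have : (0:ℝ) ≤ (j:ℝ) := Nat.cast_nonneg j
          apply div_le_div_of_nonneg_left (by linarith) one_pos (by linarith)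
      _ = b - a := by ring
  have hδ0 : Tendsto δ atTop (𝓝 0) := by
    simpa [hδ] using (tendsto_const_nhds (x := b - a)).div_atTop
      (tendsto_atTop_add_const_right atTop 2 tendsto_natCast_atTop_atTop)
  set F : ℕ → ℝ → ℝ := fun j t => (f (t + δ j) - f t) / δ j with hF
  have hFnn : ∀ j t, 0 ≤ F j t := by
    intro j t
    apply div_nonneg _ (hδpos j).le
    have := hf (le_add_of_nonneg_right (hδpos j).le : t ≤ t + δ j)
    linarith
  have hFcont : ∀ j, Continuous (F j) :=
    fun j => ((hcont.comp (continuous_id.add continuous_const)).sub hcont).div_const _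
  -- pointwise convergence of difference quotients to derivative
  have hpt : ∀ᵐ t, t ∈ Set.Ioo a b →
      ENNReal.ofReal c ≤ Filter.liminf (fun j => ENNReal.ofReal (F j t)) atTop := by
    filter_upwards [H] with t ht htab
    obtain ⟨D, hD, hcD⟩ := ht htab
    have hslope := hasDerivAt_iff_tendsto_slope.1 hD
    have htend : Tendsto (fun j => F j t) atTop (𝓝 D) := by
      have h1 : Tendsto (fun j => t + δ j) atTop (𝓝[≠] t) := by
        rw [tendsto_nhdsWithin_iff]
        constructor
        · simpa using (tendsto_const_nhds (x := t)).add hδ0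
        · exact Eventually.of_forall (fun j => by
            simp [Set.mem_setOf_eq]; have := hδpos j; intro h; linarith)
      have := hslope.comp h1
      convert this using 2 with j
      simp [hF, slope, Function.comp, div_eq_inv_mul]
    have : Tendsto (fun j => ENNReal.ofReal (F j t)) atTop (𝓝 (ENNReal.ofReal D)) :=
      (ENNReal.continuous_ofReal.tendsto _).comp htend
    rw [this.liminf_eq]
    exact ENNReal.ofReal_le_ofReal hcD
  set μ := volume.restrict (Set.Ioo a b) with hμ
  have step1 : ENNReal.ofReal c * ENNReal.ofReal (b - a) ≤
      ∫⁻ t, Filter.liminf (fun j => ENNReal.ofReal (F j t)) atTop ∂μ := by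
    have : ∫⁻ _, ENNReal.ofReal c ∂μ = ENNReal.ofReal c * ENNReal.ofReal (b - a) := by
      rw [lintegral_const, hμ, Measure.restrict_apply_univ, Real.volume_Ioo]
    rw [← this]
    refine lintegral_mono_ae ?_
    rw [hμ, ae_restrict_iff' measurableSet_Ioo]
    exact hpt
  have step2 : ∫⁻ t, Filter.liminf (fun j => ENNReal.ofReal (F j t)) atTop ∂μ ≤
      Filter.liminf (fun j => ∫⁻ t, ENNReal.ofReal (F j t) ∂μ) atTop :=
    lintegral_liminf_le (fun j => (ENNReal.continuous_ofReal.comp (hFcont j)).measurable)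
  have step3 : ∀ j, ∫⁻ t, ENNReal.ofReal (F j t) ∂μ ≤ ENNReal.ofReal (f (b + δ j) - f a) := by
    intro j
    have hint : IntegrableOn (F j) (Set.Ioo a b) volume :=
      ((hFcont j).integrableOn_Icc).mono_set Set.Ioo_subset_Icc_self
    rw [hμ, ← ofReal_integral_eq_lintegral_ofReal hint
      (Eventually.of_forall (fun t => hFnn j t))]
    apply ENNReal.ofReal_le_ofReal
    have heq : ∫ t in Set.Ioo a b, F j t = ∫ t in a..b, F j t := by
      rw [intervalIntegral.integral_of_le hab.le, integral_Ioc_eq_integral_Ioo]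
    rw [heq]
    have hintf : ∀ (u v : ℝ), IntervalIntegrable f volume u v :=
      fun u v => hcont.intervalIntegrable u v
    have key : ∫ t in a..b, F j t = ((∫ t in b..(b + δ j), f t) - ∫ t in a..(a + δ j), f t) / δ j := by
      rw [hF]
      simp only
      rw [intervalIntegral.integral_div]
      congr 1
      have hc2 : Continuous fun t : ℝ => f (t + δ j) := hcont.comp (continuous_add_right (δ j))
      rw [intervalIntegral.integral_sub (hc2.intervalIntegrable _ _) (hintf a b)]
      rw [intervalIntegral.integral_comp_add_right f (δ j)]
      have h1 : a + δ j ≤ b := by have := hδle j; linarith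
      have e1 : ∫ t in (a + δ j)..(b + δ j), f t =
          (∫ t in (a + δ j)..b, f t) + ∫ t in b..(b + δ j), f t :=
        (integral_add_adjacent_intervals (hintf _ _) (hintf _ _)).symm
      have e2 : ∫ t in a..b, f t =
          (∫ t in a..(a + δ j), f t) + ∫ t in (a + δ j)..b, f t :=
        (integral_add_adjacent_intervals (hintf _ _) (hintf _ _)).symm
      rw [e1, e2]; ring
    rw [key]
    rw [div_le_iff₀ (hδpos j)]
    have hb1 : ∫ t in b..(b + δ j), f t ≤ δ j * f (b + δ j) := by
      have : ∫ t in b..(b + δ j), f t ≤ ∫ t in b..(b + δ j), f (b + δ j) := by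
        apply intervalIntegral.integral_mono_on (by linarith [hδpos j]) (hintf _ _)
          (intervalIntegrable_const)
        intro t ht; exact hf ht.2
      simpa [intervalIntegral.integral_const, smul_eq_mul] using this
    have hb2 : δ j * f a ≤ ∫ t in a..(a + δ j), f t := by
      have : ∫ t in a..(a + δ j), f (a) ≤ ∫ t in a..(a + δ j), f t := by
        apply intervalIntegral.integral_mono_on (by linarith [hδpos j])
          (intervalIntegrable_const) (hintf _ _)
        intro t ht; exact hf ht.1
      simpa [intervalIntegral.integral_const, smul_eq_mul] using this
    nlinarith [hδpos j]
  have step4 : Filter.liminf (fun j => ∫⁻ t, ENNReal.ofReal (F j t) ∂μ) atTop ≤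
      ENNReal.ofReal (f b - f a) := by
    have htend : Tendsto (fun j => ENNReal.ofReal (f (b + δ j) - f a)) atTop
        (𝓝 (ENNReal.ofReal (f b - f a))) := by
      apply (ENNReal.continuous_ofReal.tendsto _).comp
      have : Tendsto (fun j => b + δ j) atTop (𝓝 b) := by
        simpa using (tendsto_const_nhds (x := b)).add hδ0
      exact ((hcont.tendsto b).comp this).sub tendsto_const_nhds
    calc Filter.liminf (fun j => ∫⁻ t, ENNReal.ofReal (F j t) ∂μ) atTop
        ≤ Filter.liminf (fun j => ENNReal.ofReal (f (b + δ j) - f a)) atTop :=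
          liminf_le_liminf (Eventually.of_forall step3)
      _ = ENNReal.ofReal (f b - f a) := htend.liminf_eq
  have final := le_trans step1 (le_trans step2 step4)
  rw [← ENNReal.ofReal_mul hc] at final
  have h1 : 0 ≤ f b - f a := by have := hf hab.le; linarith
  exact (ENNReal.ofReal_le_ofReal_iff h1).1 final

lemma exists_deriv_le {f D : ℝ → ℝ} {S : Set ℝ} (hf : Monotone f) (hcont : Continuous f)
    {a b : ℝ} (hab : a < b) (hS : ∀ᵐ t, t ∈ S)
    (hD : ∀ t ∈ S, HasDerivAt f (D t) t) :
    ∃ t ∈ S ∩ Set.Ioo a b, D t ≤ 2 * (f b - f a) / (b - a) := by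
  have hfab : 0 ≤ f b - f a := by have := hf hab.le; linarith
  by_contra hcon
  push_neg at hcon
  set c := 2 * (f b - f a) / (b - a) with hc
  have hc0 : 0 ≤ c := by
    rw [hc]; exact div_nonneg (by linarith) (by linarith)
  -- nonempty: some t in S ∩ Ioo a b
  have hSmem : ∃ t, t ∈ S ∩ Set.Ioo a b := by
    by_contra hemp
    push_neg at hemp
    have : Set.Ioo a b ⊆ Sᶜ := by
      intro t ht hts; exact hemp t ⟨hts, ht⟩
    have h0 : volume (Set.Ioo a b) = 0 :=
      measure_mono_null this (by have := ae_iff.mp hS; exact this)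
    rw [Real.volume_Ioo] at h0
    simp [ENNReal.ofReal_eq_zero] at h0
    linarith
  rcases eq_or_lt_of_le hfab with heq | hlt
  · -- f b = f a : f constant on [a,b], derivative at interior points is 0, contradiction
    obtain ⟨t, htS, htab⟩ := hSmem
    have hconst : ∀ s ∈ Set.Icc a b, f s = f a := by
      intro s hs
      have h1 := hf hs.1
      have h2 := hf hs.2
      linarith [heq.symm]
    have hev : f =ᶠ[nhds t] fun _ => f a := by
      filter_upwards [Ioo_mem_nhds htab.1 htab.2] with s hs
      exact hconst s ⟨hs.1.le, hs.2.le⟩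
    have : HasDerivAt (fun _ : ℝ => f a) (D t) t := by
      exact (hasDerivAt_iff_isLittleO).2 (by
        have := (hD t htS)
        exact ((hasDerivAt_iff_isLittleO).1 ((this.congr_of_eventuallyEq hev.symm))))
    have hD0 : D t = 0 := by
      have h2 : HasDerivAt (fun _ : ℝ => f a) 0 t := hasDerivAt_const t (f a)
      exact this.unique h2
    have := hcon t ⟨htS, htab⟩
    rw [hD0] at this
    rw [hc, ← heq] at this
    simp at this
  · -- f a < f b : apply Fatou
    have H : ∀ᵐ t, t ∈ Set.Ioo a b → ∃ E, HasDerivAt f E t ∧ c ≤ E := by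
      filter_upwards [hS] with t htS htab
      exact ⟨D t, hD t htS, (hcon t ⟨htS, htab⟩).le⟩
    have := mono_fatou hf hcont hab hc0 H
    rw [hc] at this
    rw [div_mul_eq_mul_div, mul_div_assoc, div_self (by linarith), mul_one] at this
    linarith


variable {n : ℕ}

local notation "E" => EuclideanSpace ℝ (Fin n)

/-- Subgradient inequality for a convex function with gradient. -/
lemma grad_subgrad {fphi : E → ℝ} {g : E → E}
    (hconv : ConvexOn ℝ univ fphi) (hgrad : ∀ x, HasGradientAt fphi (g x) x)
    (a b : E) : ⟪g a, b - a⟫ ≤ fphi b - fphi a := by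
  set ψ : ℝ → ℝ := fun t => fphi (a + t • (b - a)) with hψ
  have hline : HasDerivAt (fun t : ℝ => a + t • (b - a)) (b - a) 0 := by
    simpa using ((hasDerivAt_id (0:ℝ)).smul_const (b - a)).const_add a
  have hψd : HasDerivAt ψ ⟪g a, b - a⟫ 0 := by
    have h1 := (hgrad a).hasFDerivAt
    have h1' : HasFDerivAt fphi ((InnerProductSpace.toDual ℝ E) (g a)) (a + (0:ℝ) • (b - a)) := by
      simpa using h1
    have h2 := h1'.comp_hasDerivAt 0 hline
    simp only [InnerProductSpace.toDual_apply_apply] at h2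
    exact h2
  have hslope := hasDerivAt_iff_tendsto_slope.1 hψd
  have hbound : ∀ᶠ t in 𝓝[>] (0:ℝ), slope ψ 0 t ≤ fphi b - fphi a := by
    filter_upwards [Ioo_mem_nhdsGT_of_mem (Set.left_mem_Ico.2 one_pos)] with t ht
    have hcx := hconv.2 (Set.mem_univ a) (Set.mem_univ b)
      (by linarith [ht.1, ht.2] : 0 ≤ 1 - t) ht.1.le (by ring)
    have hpt : a + t • (b - a) = (1 - t) • a + t • b := by
      rw [smul_sub, sub_smul, one_smul]; abel
    have hψt : ψ t ≤ (1 - t) * fphi a + t * fphi b := by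
      rw [hψ]; simpa [hpt, smul_eq_mul] using hcx
    have hψ0 : ψ 0 = fphi a := by simp [hψ]
    rw [slope_def_field, sub_zero, div_le_iff₀ ht.1]
    nlinarith [ht.1, ht.2]
  have hs2 : Tendsto (slope ψ 0) (𝓝[>] (0:ℝ)) (𝓝 ⟪g a, b - a⟫) :=
    hslope.mono_left (nhdsWithin_mono 0 (fun x (hx : x ∈ Set.Ioi (0:ℝ)) => ne_of_gt hx))
  exact le_of_tendsto hs2 hbound

lemma grad_mono {fphi : E → ℝ} {g : E → E}
    (hconv : ConvexOn ℝ univ fphi) (hgrad : ∀ x, HasGradientAt fphi (g x) x)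
    (a b : E) : 0 ≤ ⟪g b - g a, b - a⟫ := by
  have h1 := grad_subgrad hconv hgrad a b
  have h2 := grad_subgrad hconv hgrad b a
  have h3 : ⟪g b, a - b⟫ = -⟪g b, b - a⟫ := by
    rw [show a - b = -(b - a) by abel, inner_neg_right]
  rw [inner_sub_left]
  rw [h3] at h2
  linarith

/-- derivative of `t ↦ ⟪g (p + t • d), d⟫` at points of differentiability of `g`. -/
lemma line_hasDerivAt {g : E → E} (p d : E) {t : ℝ}
    (hdiff : DifferentiableAt ℝ g (p + t • d)) :
    HasDerivAt (fun s : ℝ => ⟪g (p + s • d), d⟫) ⟪fderiv ℝ g (p + t • d) d, d⟫ t := by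
  have hline : HasDerivAt (fun s : ℝ => p + s • d) d t := by
    simpa using ((hasDerivAt_id t).smul_const d).const_add p
  have h1 : HasDerivAt (fun s : ℝ => g (p + s • d)) (fderiv ℝ g (p + t • d) d) t :=
    hdiff.hasFDerivAt.comp_hasDerivAt t hline
  have h2 := h1.inner ℝ (hasDerivAt_const t d)
  simpa using h2

/-- monotonicity of `t ↦ ⟪g (p + t • d), d⟫`. -/
lemma line_mono {fphi : E → ℝ} {g : E → E}
    (hconv : ConvexOn ℝ univ fphi) (hgrad : ∀ x, HasGradientAt fphi (g x) x)
    (p d : E) : Monotone (fun s : ℝ => ⟪g (p + s • d), d⟫) := by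
  intro s t hst
  have := grad_mono hconv hgrad (p + s • d) (p + t • d)
  have he : (p + t • d) - (p + s • d) = (t - s) • d := by
    rw [sub_smul]; abel
  rw [he, inner_sub_left, real_inner_smul_right, real_inner_smul_right] at this
  show ⟪g (p + s • d), d⟫ ≤ ⟪g (p + t • d), d⟫
  rcases eq_or_lt_of_le hst with rfl | hlt
  · exact le_refl _
  · nlinarith

lemma Monotone.hasDerivAt_nonneg' {f : ℝ → ℝ} (hf : Monotone f) {x D : ℝ}
    (h : HasDerivAt f D x) : 0 ≤ D := by
  have hslope := hasDerivAt_iff_tendsto_slope.1 h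
  have hs2 : Tendsto (slope f x) (𝓝[>] x) (𝓝 D) :=
    hslope.mono_left (nhdsWithin_mono x (fun y (hy : y ∈ Set.Ioi x) => ne_of_gt hy))
  refine _root_.ge_of_tendsto hs2 ?_
  filter_upwards [self_mem_nhdsWithin] with t (ht : t ∈ Set.Ioi x)
  rw [slope_def_field]
  apply div_nonneg _ (by have := ht.out; linarith)
  have := hf (le_of_lt ht.out)
  linarith

/-- PSD of fderiv of g at differentiability points. -/
lemma fderiv_psd {fphi : E → ℝ} {g : E → E}
    (hconv : ConvexOn ℝ univ fphi) (hgrad : ∀ x, HasGradientAt fphi (g x) x)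
    {u : E} (hdiff : DifferentiableAt ℝ g u) (v : E) :
    0 ≤ ⟪fderiv ℝ g u v, v⟫ := by
  have hmono := line_mono hconv hgrad u v
  have hder : HasDerivAt (fun s : ℝ => ⟪g (u + s • v), v⟫) ⟪fderiv ℝ g (u + (0:ℝ) • v) v, v⟫ 0 :=
    line_hasDerivAt u v (by simpa using hdiff)
  have h0 := hmono.hasDerivAt_nonneg' hder
  simpa using h0

/-- symmetry of fderiv of g at differentiability points. -/
lemma fderiv_symm {fphi : E → ℝ} {g : E → E}
    (hgrad : ∀ x, HasGradientAt fphi (g x) x)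
    {u : E} (hdiff : DifferentiableAt ℝ g u) (v w : E) :
    ⟪fderiv ℝ g u v, w⟫ = ⟪fderiv ℝ g u w, v⟫ := by
  set L : E →L[ℝ] (E →L[ℝ] ℝ) :=
    (InnerProductSpace.toDual ℝ (EuclideanSpace ℝ (Fin n))).toContinuousLinearEquiv.toContinuousLinearMap with hL
  have hf : ∀ y, HasFDerivAt fphi (L (g y)) y := fun y => (hgrad y).hasFDerivAt
  have hLg : HasFDerivAt (fun y => L (g y)) (L.comp (fderiv ℝ g u)) u :=
    L.hasFDerivAt.comp u hdiff.hasFDerivAt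
  have := second_derivative_symmetric hf hLg v w
  simpa [hL, InnerProductSpace.toDual_apply_apply] using this

/-- a.e. `z`, a.e. `t`, `g` is differentiable at `x̄ + z + t • d`. -/
lemma ae_ae_diff {g : E → E} {K : NNReal} (hgLip : LipschitzWith K g) (xbar d : E) :
    ∀ᵐ z : E, ∀ᵐ t : ℝ, DifferentiableAt ℝ g (xbar + z + t • d) := by
  set N : Set (EuclideanSpace ℝ (Fin n)) := {u | ¬ DifferentiableAt ℝ g u} with hN
  have hNmeas : MeasurableSet N := (measurableSet_of_differentiableAt ℝ g).compl
  have hNnull : volume N = 0 := by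
    have := hgLip.ae_differentiableAt (μ := volume)
    simpa [hN, ae_iff] using this
  -- the set in ℝ × E
  set T : Set (ℝ × EuclideanSpace ℝ (Fin n)) := {p | xbar + p.2 + p.1 • d ∈ N} with hT
  have hTmeas : MeasurableSet T := by
    have hcont : Continuous fun p : ℝ × EuclideanSpace ℝ (Fin n) => xbar + p.2 + p.1 • d := by
      fun_prop
    exact hcont.measurable hNmeas
  have hTnull : (volume : Measure ℝ).prod (volume : Measure (EuclideanSpace ℝ (Fin n))) T = 0 := by
    rw [Measure.measure_prod_null hTmeas]
    refine Eventually.of_forall (fun t => ?_)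
    have heq : (Prod.mk t ⁻¹' T) = (fun z => z + (xbar + t • d)) ⁻¹' N := by
      ext z
      have hpt : xbar + z + t • d = z + (xbar + t • d) := by abel
      simp only [hT, Set.mem_preimage, Set.mem_setOf_eq, hpt]
    show volume (Prod.mk t ⁻¹' T) = 0
    rw [heq, measure_preimage_add_right]
    exact hNnull
  -- swap
  set U : Set (EuclideanSpace ℝ (Fin n) × ℝ) := Prod.swap ⁻¹' T with hU
  have hUnull : (volume : Measure (EuclideanSpace ℝ (Fin n))).prod (volume : Measure ℝ) U = 0 := by
    have hswap : (volume : Measure ℝ).prod (volume : Measure (EuclideanSpace ℝ (Fin n))) =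
        ((volume : Measure (EuclideanSpace ℝ (Fin n))).prod (volume : Measure ℝ)).map Prod.swap :=
      (Measure.prod_swap).symm
    rw [hswap] at hTnull
    rwa [Measure.map_apply measurable_swap hTmeas] at hTnull
  have hUmeas : MeasurableSet U := measurable_swap hTmeas
  have := (Measure.measure_prod_null hUmeas).1 hUnull
  filter_upwards [this] with z hz
  have : ∀ᵐ t : ℝ, t ∉ (Prod.mk z ⁻¹' U) := by
    rw [ae_iff]
    simp only [not_not]; exact hz
  filter_upwards [this] with t ht
  simp only [hU, hT, Set.mem_preimage, Prod.swap, Set.mem_setOf_eq, hN] at ht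
  exact not_not.mp ht

lemma apply_eq_zero_of_psd {A : EuclideanSpace ℝ (Fin n) →L[ℝ] EuclideanSpace ℝ (Fin n)}
    (hpsd : ∀ v, 0 ≤ ⟪A v, v⟫) (hsymm : ∀ v w, ⟪A v, w⟫ = ⟪A w, v⟫)
    {d : EuclideanSpace ℝ (Fin n)} (hd : ⟪A d, d⟫ = 0) : A d = 0 := by
  have key : ∀ v, ⟪A d, v⟫ = 0 := by
    intro v
    set γ := ⟪A v, v⟫ with hγdef
    set β := ⟪A d, v⟫ with hβdef
    have hγ : 0 ≤ γ := hpsd v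
    have hexp : ∀ t : ℝ, 0 ≤ 2 * t * β + t ^ 2 * γ := by
      intro t
      have h0 := hpsd (d + t • v)
      rw [map_add, A.map_smul] at h0
      rw [inner_add_left, inner_add_right, inner_add_right, real_inner_smul_left,
        real_inner_smul_left, real_inner_smul_right, real_inner_smul_right] at h0
      have hsvd := hsymm v d
      rw [hd, hsvd, ← hβdef, ← hγdef] at h0
      nlinarith [h0]
    have hγ1 : (0:ℝ) < γ + 1 := by linarith
    have h := hexp (-β / (γ + 1))
    have e : 2 * (-β / (γ + 1)) * β + (-β / (γ + 1)) ^ 2 * γ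
        = -(β ^ 2 * (γ + 2)) / (γ + 1) ^ 2 := by
      field_simp
      ring
    rw [e] at h
    have hden : (0:ℝ) < (γ + 1) ^ 2 := pow_pos hγ1 2
    have h2 : 0 ≤ -(β ^ 2 * (γ + 2)) := by
      by_contra hneg
      push_neg at hneg
      have := div_neg_of_neg_of_pos hneg hden
      linarith
    nlinarith [sq_nonneg β]
  have := key (A d)
  exact inner_self_eq_zero.mp this

/-- Lemma 3: if `x̄` minimizes the convex differentiable function `f_φ`
whose Lipschitz gradient `g = ∇f_φ` is BD-regular at `x̄`, then `x̄` is the unique minimizer. -/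
theorem unique_min_of_BD_regular (n : ℕ)
    (fphi : EuclideanSpace ℝ (Fin n) → ℝ)
    (g : EuclideanSpace ℝ (Fin n) → EuclideanSpace ℝ (Fin n))
    (hconv : ConvexOn ℝ univ fphi)
    (hgrad : ∀ x, HasGradientAt fphi (g x) x)
    (K : NNReal) (hgLip : LipschitzWith K g)
    (xbar : EuclideanSpace ℝ (Fin n))
    (hmin : ∀ x, fphi xbar ≤ fphi x)
    (hBD : ∀ A ∈ BSubdiff g xbar, Function.Injective A) :
    ∀ y, (∀ x, fphi y ≤ fphi x) → y = xbar := by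
  intro y hy
  by_contra hne
  set d : EuclideanSpace ℝ (Fin n) := y - xbar with hddef
  have hdne : d ≠ 0 := sub_ne_zero.mpr hne
  have hfyx : fphi y = fphi xbar := le_antisymm (hy xbar) (hmin y)
  -- Step 1: g vanishes on the segment
  have hseg : ∀ t ∈ Set.Icc (0:ℝ) 1, g (xbar + t • d) = 0 := by
    intro t ht
    set xt := xbar + t • d with hxt
    have hxtconv : xt = (1 - t) • xbar + t • y := by
      rw [hxt, hddef, smul_sub, sub_smul, one_smul]; abel
    have hmin_t : ∀ x, fphi xt ≤ fphi x := by
      intro x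
      have hcx := hconv.2 (Set.mem_univ xbar) (Set.mem_univ y)
        (by linarith [ht.1, ht.2] : 0 ≤ 1 - t) ht.1 (by ring)
      rw [← hxtconv] at hcx
      calc fphi xt ≤ (1 - t) * fphi xbar + t * fphi y := by simpa [smul_eq_mul] using hcx
        _ = fphi xbar := by rw [hfyx]; ring
        _ ≤ fphi x := hmin x
    have hloc : IsLocalMin fphi xt := Filter.Eventually.of_forall (fun x => hmin_t x)
    have hz := hloc.hasFDerivAt_eq_zero (hgrad xt).hasFDerivAt
    have : (InnerProductSpace.toDual ℝ (EuclideanSpace ℝ (Fin n))) (g xt) =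
        (InnerProductSpace.toDual ℝ (EuclideanSpace ℝ (Fin n))) 0 := by
      rw [map_zero]; exact hz
    exact (InnerProductSpace.toDual ℝ (EuclideanSpace ℝ (Fin n))).injective this
  -- epsilon sequence
  set ε : ℕ → ℝ := fun k => 1 / ((k : ℝ) + 1) with hε
  have hεpos : ∀ k, 0 < ε k := fun k => by positivity
  have hεle1 : ∀ k, ε k ≤ 1 := by
    intro k
    rw [hε]
    rw [div_le_one (by positivity)]
    simp [Nat.cast_nonneg]
  -- Step 2: construct good points
  have hkey : ∀ k : ℕ, ∃ u : EuclideanSpace ℝ (Fin n), DifferentiableAt ℝ g u ∧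
      ‖u - xbar‖ ≤ (1 + ‖d‖) * ε k ∧ 0 ≤ ⟪fderiv ℝ g u d, d⟫ ∧
      ⟪fderiv ℝ g u d, d⟫ ≤ 4 * K * ‖d‖ * ε k := by
    intro k
    set e := ε k with hedef
    have hepos : 0 < e := hεpos k
    have hele : e ≤ 1 := hεle1 k
    -- pick z
    obtain ⟨z, hzball, hzgood⟩ :
        ∃ z : EuclideanSpace ℝ (Fin n), z ∈ Metric.ball (0 : EuclideanSpace ℝ (Fin n)) (e ^ 2) ∧
          ∀ᵐ t : ℝ, DifferentiableAt ℝ g (xbar + z + t • d) := by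
      by_contra hcon
      push_neg at hcon
      have hsub : Metric.ball (0 : EuclideanSpace ℝ (Fin n)) (e ^ 2) ⊆
          {z | ¬ ∀ᵐ t : ℝ, DifferentiableAt ℝ g (xbar + z + t • d)} :=
        fun z hz => Filter.not_eventually.mpr (hcon z hz)
      have hnull : volume {z : EuclideanSpace ℝ (Fin n) |
          ¬ ∀ᵐ t : ℝ, DifferentiableAt ℝ g (xbar + z + t • d)} = 0 := by
        have := ae_ae_diff hgLip xbar d
        simpa [ae_iff] using this
      have := measure_mono_null hsub hnull
      have hpos := Metric.measure_ball_pos volume (0 : EuclideanSpace ℝ (Fin n))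
        (show (0:ℝ) < e ^ 2 by positivity)
      rw [this] at hpos
      exact lt_irrefl _ hpos
    have hznorm : ‖z‖ ≤ e ^ 2 := by
      have := Metric.mem_ball.mp hzball
      rw [dist_zero_right] at this
      linarith
    set p := xbar + z with hpdef
    set φ : ℝ → ℝ := fun t => ⟪g (p + t • d), d⟫ with hφ
    set S : Set ℝ := {t | DifferentiableAt ℝ g (p + t • d)} with hS
    have hSae : ∀ᵐ t : ℝ, t ∈ S := hzgood
    have hmono : Monotone φ := line_mono hconv hgrad p d
    have hφcont : Continuous φ := by
      apply Continuous.inner _ continuous_const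
      exact hgLip.continuous.comp (by continuity)
    have hD : ∀ t ∈ S, HasDerivAt φ ((fun t => ⟪fderiv ℝ g (p + t • d) d, d⟫) t) t :=
      fun t ht => line_hasDerivAt p d ht
    obtain ⟨t, ⟨htS, htIoo⟩, htle⟩ := exists_deriv_le hmono hφcont hepos hSae hD
    refine ⟨p + t • d, htS, ?_, fderiv_psd hconv hgrad htS d, ?_⟩
    · have h1 : p + t • d - xbar = z + t • d := by rw [hpdef]; abel
      rw [h1]
      calc ‖z + t • d‖ ≤ ‖z‖ + ‖t • d‖ := norm_add_le _ _
        _ ≤ e ^ 2 + e * ‖d‖ := by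
            refine add_le_add hznorm ?_
            rw [norm_smul, Real.norm_eq_abs, abs_of_pos htIoo.1]
            exact mul_le_mul htIoo.2.le le_rfl (norm_nonneg d) (by linarith)
        _ ≤ (1 + ‖d‖) * e := by nlinarith
    · -- bound on the derivative
      have hφe : φ e - φ 0 ≤ 2 * K * ‖z‖ * ‖d‖ := by
        have hg1 : ‖g (p + e • d)‖ ≤ K * ‖z‖ := by
          have hsegue := hseg e ⟨hepos.le, hele⟩
          have := hgLip.dist_le_mul (p + e • d) (xbar + e • d)
          rw [dist_eq_norm, dist_eq_norm] at this
          have harg : p + e • d - (xbar + e • d) = z := by rw [hpdef]; abel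
          rw [harg, hsegue, sub_zero] at this
          exact this
        have hg0 : ‖g p‖ ≤ K * ‖z‖ := by
          have hsegue := hseg 0 ⟨le_rfl, zero_le_one⟩
          have := hgLip.dist_le_mul p (xbar + (0:ℝ) • d)
          rw [dist_eq_norm, dist_eq_norm] at this
          have harg : p - (xbar + (0:ℝ) • d) = z := by rw [hpdef]; simp
          rw [harg, hsegue, sub_zero] at this
          exact this
        have h1 : φ e ≤ K * ‖z‖ * ‖d‖ := by
          calc φ e ≤ ‖g (p + e • d)‖ * ‖d‖ := real_inner_le_norm _ _
            _ ≤ K * ‖z‖ * ‖d‖ := mul_le_mul hg1 le_rfl (norm_nonneg d) (by positivity)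
        have h2 : -(K * ‖z‖ * ‖d‖) ≤ φ 0 := by
          have := real_inner_le_norm (g (p + (0:ℝ) • d)) d
          have habs := abs_real_inner_le_norm (g (p + (0:ℝ) • d)) d
          have hb : ‖g (p + (0:ℝ) • d)‖ * ‖d‖ ≤ K * ‖z‖ * ‖d‖ := by
            have : g (p + (0:ℝ) • d) = g p := by norm_num
            rw [this]
            exact mul_le_mul hg0 le_rfl (norm_nonneg d) (by positivity)
          have := neg_abs_le (φ 0)
          have : -(‖g (p + (0:ℝ) • d)‖ * ‖d‖) ≤ φ 0 := by
            have h' := (abs_le.mp habs).1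
            exact le_trans (by linarith) h'
          linarith
        linarith
      have hzd : 2 * (φ e - φ 0) / (e - 0) ≤ 4 * K * ‖d‖ * e := by
        rw [sub_zero, div_le_iff₀ hepos]
        have h2 : 2 * (φ e - φ 0) ≤ 4 * K * ‖z‖ * ‖d‖ := by linarith
        calc 2 * (φ e - φ 0) ≤ 4 * K * ‖z‖ * ‖d‖ := h2
          _ ≤ 4 * K * e ^ 2 * ‖d‖ :=
              mul_le_mul_of_nonneg_right
                (mul_le_mul_of_nonneg_left hznorm (by positivity)) (norm_nonneg d)
          _ = 4 * K * ‖d‖ * e * e := by ring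
      exact le_trans htle hzd
  choose u hudiff hunear hupsd huder using hkey
  -- Step 3: compactness
  have hball : ∀ k, fderiv ℝ g (u k) ∈ Metric.closedBall (0 : EuclideanSpace ℝ (Fin n) →L[ℝ]
      EuclideanSpace ℝ (Fin n)) K := by
    intro k
    rw [Metric.mem_closedBall, dist_zero_right]
    exact norm_fderiv_le_of_lipschitz ℝ hgLip
  obtain ⟨A, -, ψ, hψ, hA⟩ := (isCompact_closedBall (0 : EuclideanSpace ℝ (Fin n) →L[ℝ]
      EuclideanSpace ℝ (Fin n)) (K : ℝ)).tendsto_subseq hball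
  have hε0 : Tendsto ε atTop (𝓝 0) := by
    rw [hε]
    exact tendsto_one_div_add_atTop_nhds_zero_nat
  have hutend : Tendsto u atTop (𝓝 xbar) := by
    rw [tendsto_iff_dist_tendsto_zero]
    have hb : Tendsto (fun k => (1 + ‖d‖) * ε k) atTop (𝓝 0) := by
      simpa [hε, one_div] using hε0.const_mul (1 + ‖d‖)
    refine squeeze_zero (fun k => dist_nonneg) (fun k => ?_) hb
    rw [dist_eq_norm]
    exact hunear k
  have hmem : A ∈ BSubdiff g xbar :=
    ⟨fun j => u (ψ j), fun j => hudiff _, hutend.comp hψ.tendsto_atTop, hA⟩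
  have happly : ∀ v, Tendsto (fun j => fderiv ℝ g (u (ψ j)) v) atTop (𝓝 (A v)) := by
    intro v
    exact ((ContinuousLinearMap.apply ℝ (EuclideanSpace ℝ (Fin n)) v).continuous.tendsto A).comp hA
  have hinner : ∀ v w, Tendsto (fun j => ⟪fderiv ℝ g (u (ψ j)) v, w⟫) atTop (𝓝 ⟪A v, w⟫) :=
    fun v w => (happly v).inner tendsto_const_nhds
  -- A is PSD
  have hApsd : ∀ v, 0 ≤ ⟪A v, v⟫ := by
    intro v
    exact ge_of_tendsto' (hinner v v) (fun j => fderiv_psd hconv hgrad (hudiff _) v)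
  -- A is symmetric
  have hAsymm : ∀ v w, ⟪A v, w⟫ = ⟪A w, v⟫ := by
    intro v w
    have h1 := hinner v w
    have h2 := hinner w v
    have : ∀ j, ⟪fderiv ℝ g (u (ψ j)) v, w⟫ = ⟪fderiv ℝ g (u (ψ j)) w, v⟫ :=
      fun j => fderiv_symm hgrad (hudiff _) v w
    exact tendsto_nhds_unique (h1.congr (fun j => this j)) h2
  -- ⟪A d, d⟫ = 0
  have hAd : ⟪A d, d⟫ = 0 := by
    have hle : ⟪A d, d⟫ ≤ 0 := by
      have hb : Tendsto (fun j => 4 * K * ‖d‖ * ε (ψ j)) atTop (𝓝 0) := by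
        have hψtend : Tendsto (fun j => ε (ψ j)) atTop (𝓝 0) := hε0.comp hψ.tendsto_atTop
        simpa using hψtend.const_mul (4 * K * ‖d‖)
      exact le_of_tendsto_of_tendsto (hinner d d) hb
        (Eventually.of_forall (fun j => huder (ψ j)))
    exact le_antisymm hle (hApsd d)
  have hAd0 : A d = 0 := apply_eq_zero_of_psd hApsd hAsymm hAd
  have hinj := hBD A hmem
  have : d = 0 := hinj (by rw [hAd0, map_zero])
  exact hdne this
end Aux
end

section
/- Consider the iteration x^{k+1} = xᵏ - (Vₖ + αₖI)^{-1} gᵃ(xᵏ, εₖ) converging to x̄ with g(x̄) = 0, where: ‖gᵃ(xᵏ,εₖ) - g(xᵏ)‖ = o(‖xᵏ - x̄‖); there exist V̄ₖ with ‖Vₖ - V̄ₖ‖ = o(1) and ‖g(xᵏ) - g(x̄) - V̄ₖ(xᵏ - x̄)‖ = o(‖xᵏ - x̄‖); αₖ → 0; and ‖(Vₖ + αₖI)^{-1}‖ = O(1). Then ‖x^{k+1} - x̄‖ = o(‖xᵏ - x̄‖), i.e. the sequence converges Q-superlinearly. -/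
open Set Filter Topology RealInnerProductSpace

/-- Q-superlinear convergence of the approximate Newton iteration
`x^{k+1} = xᵏ - (Vₖ + αₖ I)⁻¹ gᵃ(xᵏ, εₖ)`. -/
theorem superlinear_convergence (n : ℕ)
    (g : EuclideanSpace ℝ (Fin n) → EuclideanSpace ℝ (Fin n))
    (K : NNReal) (hgLip : LipschitzWith K g)
    (xbar : EuclideanSpace ℝ (Fin n)) (hgx : g xbar = 0)
    (x : ℕ → EuclideanSpace ℝ (Fin n))
    (hx : Tendsto x atTop (𝓝 xbar))
    (V : ℕ → EuclideanSpace ℝ (Fin n) →L[ℝ] EuclideanSpace ℝ (Fin n))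
    (hVsymm : ∀ k d e, ⟪V k d, e⟫ = ⟪d, V k e⟫)
    (hVpsd : ∀ k d, (0:ℝ) ≤ ⟪d, V k d⟫)
    (α : ℕ → ℝ) (hαpos : ∀ k, 0 < α k) (hα : Tendsto α atTop (𝓝 0))
    -- `W k = (Vₖ + αₖ I)⁻¹`
    (W : ℕ → EuclideanSpace ℝ (Fin n) →L[ℝ] EuclideanSpace ℝ (Fin n))
    (hWl : ∀ k, (W k).comp (V k + α k • ContinuousLinearMap.id ℝ (EuclideanSpace ℝ (Fin n)))
      = ContinuousLinearMap.id ℝ (EuclideanSpace ℝ (Fin n)))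
    (hWr : ∀ k, (V k + α k • ContinuousLinearMap.id ℝ (EuclideanSpace ℝ (Fin n))).comp (W k)
      = ContinuousLinearMap.id ℝ (EuclideanSpace ℝ (Fin n)))
    (hWbdd : ∃ C : ℝ, ∀ k, ‖W k‖ ≤ C)
    (ga : ℕ → EuclideanSpace ℝ (Fin n))
    (hga : (fun k => ga k - g (x k)) =o[atTop] (fun k => x k - xbar))
    (Vbar : ℕ → EuclideanSpace ℝ (Fin n) →L[ℝ] EuclideanSpace ℝ (Fin n))
    (hVbar : Tendsto (fun k => ‖V k - Vbar k‖) atTop (𝓝 0))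
    (hVbarTaylor : (fun k => g (x k) - g xbar - Vbar k (x k - xbar))
      =o[atTop] (fun k => x k - xbar))
    (hiter : ∀ k, x (k + 1) = x k - W k (ga k)) :
    (fun k => x (k + 1) - xbar) =o[atTop] (fun k => x k - xbar) := by

  obtain ⟨C, hC⟩ := hWbdd
  set v : ℕ → EuclideanSpace ℝ (Fin n) := fun k =>
    ((V k - Vbar k) (x k - xbar) + α k • (x k - xbar))
      - (g (x k) - g xbar - Vbar k (x k - xbar)) - (ga k - g (x k)) with hv
  have key : ∀ k, x (k + 1) - xbar = W k (v k) := by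
    intro k
    have h1 : W k ((V k + α k • ContinuousLinearMap.id ℝ (EuclideanSpace ℝ (Fin n)))
        (x k - xbar)) = x k - xbar := by
      have := congrArg (fun A => A (x k - xbar)) (hWl k)
      simpa using this
    have hvk : v k = (V k + α k • ContinuousLinearMap.id ℝ (EuclideanSpace ℝ (Fin n)))
        (x k - xbar) - ga k := by
      simp only [hv, hgx, ContinuousLinearMap.add_apply, ContinuousLinearMap.sub_apply,
        ContinuousLinearMap.smul_apply, ContinuousLinearMap.id_apply]
      abel
    rw [hvk, map_sub, h1, hiter k]
    abel
  have hA : (fun k => (V k - Vbar k) (x k - xbar)) =o[atTop] (fun k => x k - xbar) := by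
    rw [Asymptotics.isLittleO_iff]
    intro c hc
    filter_upwards [hVbar.eventually (gt_mem_nhds hc)] with k hk
    calc ‖(V k - Vbar k) (x k - xbar)‖ ≤ ‖V k - Vbar k‖ * ‖x k - xbar‖ :=
          (V k - Vbar k).le_opNorm _
      _ ≤ c * ‖x k - xbar‖ := by
          exact mul_le_mul_of_nonneg_right hk.le (norm_nonneg _)
  have hB : (fun k => α k • (x k - xbar)) =o[atTop] (fun k => x k - xbar) := by
    rw [Asymptotics.isLittleO_iff]
    intro c hc
    filter_upwards [hα.abs.eventually (gt_mem_nhds (show |(0:ℝ)| < c by simpa using hc))] with k hk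
    rw [norm_smul]
    exact mul_le_mul_of_nonneg_right (by simpa using hk.le) (norm_nonneg _)
  have hvo : v =o[atTop] (fun k => x k - xbar) := ((hA.add hB).sub hVbarTaylor).sub hga
  have hWo : (fun k => W k (v k)) =O[atTop] v :=
    Asymptotics.IsBigO.of_bound C <| Filter.Eventually.of_forall fun k =>
      le_trans ((W k).le_opNorm _) (mul_le_mul_of_nonneg_right (hC k) (norm_nonneg _))
  have : (fun k => x (k + 1) - xbar) = fun k => W k (v k) := funext key
  rw [this]
  exact hWo.trans_isLittleO hvo
end
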